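/- arXiv:1301.1157 — 2 statements merged into one kernel-verified Lean document; each statement's English description precedes it below -/
import Mathlib

section
/- For every finite graph G with max(α_M(G), ω_M(G)) = 2, p(G) = 2 if and only if G has exactly 2 isolated vertices or the complement of G has exactly 2 isolated vertices; otherwise p(G) = 1. -/
open Set

/-- `M` is a module of `G`: every vertex outside `M` is adjacent to all of `M` or to none. -/
def SimpleGraph.IsModule {V : Type*} (G : SimpleGraph V) (M : Set V) : Prop :=
  ∀ v ∉ M, (∀ m ∈ M, G.Adj v m) ∨ (∀ m ∈ M, ¬ G.Adj v m)

/-- `G` is prime: at least 4 vertices and all modules are trivial. -/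
def SimpleGraph.IsPrimeGraph {V : Type*} [Fintype V] (G : SimpleGraph V) : Prop :=
  4 ≤ Fintype.card V ∧
    ∀ M : Set V, G.IsModule M → M = ∅ ∨ (∃ v, M = {v}) ∨ M = Set.univ

/-- `H` on `V ⊕ W` is an extension of `G` on `V`: it induces `G` on the `inl` copy of `V`. -/
def SimpleGraph.IsExtension {V W : Type*} (G : SimpleGraph V) (H : SimpleGraph (V ⊕ W)) : Prop :=
  ∀ u v : V, H.Adj (Sum.inl u) (Sum.inl v) ↔ G.Adj u v

/-- The prime bound of `G`: the least `p` such that `G` has a prime `p`-extension. -/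
noncomputable def SimpleGraph.primeBound {V : Type*} [Fintype V] (G : SimpleGraph V) : ℕ :=
  sInf {p : ℕ | ∃ H : SimpleGraph (V ⊕ Fin p), G.IsExtension H ∧ H.IsPrimeGraph}

/-- The modular clique number: largest size of a module of `G` that is a clique. -/
noncomputable def SimpleGraph.modularCliqueNumber {V : Type*} [Fintype V]
    (G : SimpleGraph V) : ℕ :=
  sSup {n : ℕ | ∃ M : Set V, G.IsModule M ∧ G.IsClique M ∧ M.ncard = n}

/-- The modular stability number: `ω_M` of the complement. -/
noncomputable def SimpleGraph.modularStabilityNumber {V : Type*} [Fintype V]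
    (G : SimpleGraph V) : ℕ :=
  Gᶜ.modularCliqueNumber

/-- The number of isolated vertices of `G`. -/
noncomputable def SimpleGraph.isolatedCount {V : Type*} [Fintype V] (G : SimpleGraph V) : ℕ :=
  {v : V | ∀ w, ¬ G.Adj v w}.ncard

/-- `P` is a modular partition of `G`. -/
def SimpleGraph.IsModularPartition {V : Type*} (G : SimpleGraph V) (P : Set (Set V)) : Prop :=
  (∀ X ∈ P, X.Nonempty) ∧ ⋃₀ P = Set.univ ∧ P.Pairwise Disjoint ∧ ∀ X ∈ P, G.IsModule X

/-- The quotient graph `G/P` of a (modular) partition `P`. -/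
def SimpleGraph.quotientGraph {V : Type*} (G : SimpleGraph V) (P : Set (Set V)) :
    SimpleGraph P where
  Adj X Y := (X : Set V) ≠ (Y : Set V) ∧ ∃ u ∈ (X : Set V), ∃ v ∈ (Y : Set V), G.Adj u v
  symm := by
    constructor
    rintro X Y ⟨hne, u, hu, v, hv, h⟩
    exact ⟨fun h' => hne h'.symm, v, hv, u, hu, h.symm⟩
  loopless := by
    constructor
    rintro X ⟨hne, -⟩
    exact hne rfl

/-- `M` is a strong module of `G`. -/
def SimpleGraph.IsStrongModule {V : Type*} (G : SimpleGraph V) (M : Set V) : Prop :=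
  G.IsModule M ∧ ∀ N : Set V, G.IsModule N → (M ∩ N).Nonempty → M ⊆ N ∨ N ⊆ M


namespace PB

open SimpleGraph

variable {V : Type*} {G : SimpleGraph V} {M N C S : Set V}

lemma isModule_empty (G : SimpleGraph V) : G.IsModule (∅ : Set V) := by
  intro v _; exact Or.inr (fun m hm => absurd hm (notMem_empty m))

lemma isModule_univ (G : SimpleGraph V) : G.IsModule (univ : Set V) := by
  intro v hv; exact absurd (mem_univ v) hv

lemma isModule_singleton (G : SimpleGraph V) (x : V) : G.IsModule ({x} : Set V) := by
  intro v _
  by_cases h : G.Adj v x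
  · exact Or.inl (by rintro m rfl; exact h)
  · exact Or.inr (by rintro m rfl; exact h)

lemma module_uniform_iff (hM : G.IsModule M) {v a b : V} (hv : v ∉ M) (ha : a ∈ M)
    (hb : b ∈ M) : G.Adj v a ↔ G.Adj v b := by
  rcases hM v hv with h | h
  · simp [h a ha, h b hb]
  · simp [h a ha, h b hb]

lemma isModule_inter (hM : G.IsModule M) (hN : G.IsModule N) : G.IsModule (M ∩ N) := by
  intro v hv
  by_cases hvM : v ∈ M
  · have hvN : v ∉ N := fun h => hv ⟨hvM, h⟩
    rcases hN v hvN with h | h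
    · exact Or.inl fun m hm => h m hm.2
    · exact Or.inr fun m hm => h m hm.2
  · rcases hM v hvM with h | h
    · exact Or.inl fun m hm => h m hm.1
    · exact Or.inr fun m hm => h m hm.1

lemma isModule_union (hM : G.IsModule M) (hN : G.IsModule N) (h : (M ∩ N).Nonempty) :
    G.IsModule (M ∪ N) := by
  obtain ⟨x, hxM, hxN⟩ := h
  intro v hv
  have hvM : v ∉ M := fun h => hv (Or.inl h)
  have hvN : v ∉ N := fun h => hv (Or.inr h)
  by_cases hx : G.Adj v x
  · refine Or.inl ?_
    rintro m (hm | hm)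
    · exact (module_uniform_iff hM hvM hm hxM).mpr hx
    · exact (module_uniform_iff hN hvN hm hxN).mpr hx
  · refine Or.inr ?_
    rintro m (hm | hm)
    · exact fun hc => hx ((module_uniform_iff hM hvM hm hxM).mp hc)
    · exact fun hc => hx ((module_uniform_iff hN hvN hm hxN).mp hc)

lemma module_compl (hM : G.IsModule M) : Gᶜ.IsModule M := by
  intro v hv
  rcases hM v hv with h | h
  · exact Or.inr fun m hm => by simp [SimpleGraph.compl_adj, h m hm]
  · exact Or.inl fun m hm => by
      have : v ≠ m := fun he => hv (he ▸ hm)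
      simp [SimpleGraph.compl_adj, this, h m hm]

lemma isModule_compl_iff : Gᶜ.IsModule M ↔ G.IsModule M := by
  constructor
  · intro h; have := module_compl h; rwa [compl_compl] at this
  · exact fun h => module_compl h

lemma isModule_preimage {K : Set V} (hMK : M ⊆ K) (hM : G.IsModule M) :
    (G.induce K).IsModule (Subtype.val ⁻¹' M) := by
  intro v hv
  rcases hM v.1 hv with h | h
  · exact Or.inl fun m hm => h m.1 hm
  · exact Or.inr fun m hm => h m.1 hm

lemma isModule_image {K : Set V} {M' : Set ↥K} (hK : G.IsModule K)
    (hM : (G.induce K).IsModule M') : G.IsModule (Subtype.val '' M') := by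
  intro v hv
  by_cases hvK : v ∈ K
  · have hv' : (⟨v, hvK⟩ : ↥K) ∉ M' := fun h => hv ⟨_, h, rfl⟩
    rcases hM _ hv' with h | h
    · exact Or.inl (by rintro m ⟨m', hm', rfl⟩; exact h m' hm')
    · exact Or.inr (by rintro m ⟨m', hm', rfl⟩; exact h m' hm')
  · rcases hK v hvK with h | h
    · exact Or.inl (by rintro m ⟨m', hm', rfl⟩; exact h m'.1 m'.2)
    · exact Or.inr (by rintro m ⟨m', hm', rfl⟩; exact h m'.1 m'.2)

/-- No module that is a clique or a stable set has three distinct elements. -/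
def NoTrip (G : SimpleGraph V) : Prop :=
  ∀ M : Set V, G.IsModule M →
    ((∀ x ∈ M, ∀ y ∈ M, x ≠ y → G.Adj x y) ∨ (∀ x ∈ M, ∀ y ∈ M, ¬ G.Adj x y)) →
    ∀ x ∈ M, ∀ y ∈ M, ∀ z ∈ M, x ≠ y → x ≠ z → y ≠ z → False

lemma NoTrip.compl (h : NoTrip G) : NoTrip Gᶜ := by
  intro M hM hcs x hx y hy z hz hxy hxz hyz
  refine h M (isModule_compl_iff.mp hM) ?_ x hx y hy z hz hxy hxz hyz
  rcases hcs with hc | hs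
  · refine Or.inr fun a ha b hb hab => ?_
    by_cases he : a = b
    · exact G.loopless.irrefl b (he ▸ hab)
    · exact (hc a ha b hb he).2 hab
  · refine Or.inl fun a ha b hb hne => ?_
    have := hs a ha b hb
    rw [SimpleGraph.compl_adj] at this
    push_neg at this
    exact by_contra fun hn => hn (this hne)

lemma NoTrip.induce (h : NoTrip G) {K : Set V} (hK : G.IsModule K) :
    NoTrip (G.induce K) := by
  intro M hM hcs x hx y hy z hz hxy hxz hyz
  refine h (Subtype.val '' M) (isModule_image hK hM) ?_ x.1 ⟨x, hx, rfl⟩ y.1 ⟨y, hy, rfl⟩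
    z.1 ⟨z, hz, rfl⟩ (fun he => hxy (Subtype.ext he)) (fun he => hxz (Subtype.ext he))
    (fun he => hyz (Subtype.ext he))
  rcases hcs with hc | hs
  · refine Or.inl ?_
    rintro a ⟨a', ha', rfl⟩ b ⟨b', hb', rfl⟩ hab
    exact hc a' ha' b' hb' (fun he => hab (congrArg _ he))
  · refine Or.inr ?_
    rintro a ⟨a', ha', rfl⟩ b ⟨b', hb', rfl⟩
    exact hs a' ha' b' hb'

lemma isModule_of_isolated (h : ∀ x ∈ M, ∀ w, ¬ G.Adj x w) : G.IsModule M :=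
  fun v _ => Or.inr fun m hm hadj => h m hm v hadj.symm

lemma clique_submodule (hM : G.IsModule M) (hcl : ∀ x ∈ M, ∀ y ∈ M, x ≠ y → G.Adj x y)
    (hsub : M' ⊆ M) : G.IsModule M' := by
  intro v hv
  by_cases hvM : v ∈ M
  · exact Or.inl fun m hm => hcl v hvM m (hsub hm) (fun he => hv (he ▸ hm))
  · rcases hM v hvM with h | h
    · exact Or.inl fun m hm => h m (hsub hm)
    · exact Or.inr fun m hm => h m (hsub hm)

lemma stable_submodule (hM : G.IsModule M) (hst : ∀ x ∈ M, ∀ y ∈ M, ¬ G.Adj x y)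
    (hsub : M' ⊆ M) : G.IsModule M' := by
  intro v hv
  by_cases hvM : v ∈ M
  · exact Or.inr fun m hm => hst v hvM m (hsub hm)
  · rcases hM v hvM with h | h
    · exact Or.inl fun m hm => h m (hsub hm)
    · exact Or.inr fun m hm => h m (hsub hm)



lemma walk_stay {u v : V} (w : G.Walk u v) (h : ∀ a ∈ M, ∀ b, b ∉ M → ¬ G.Adj a b)
    (hu : u ∈ M) : v ∈ M := by
  induction w with
  | nil => exact hu
  | @cons a c b hadj p ih =>
      by_cases hc : c ∈ M
      · exact ih hc
      · exact absurd hadj (h a hu c hc)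

lemma not_reachable (h : ∀ a ∈ M, ∀ b, b ∉ M → ¬ G.Adj a b) {a b : V} (ha : a ∈ M)
    (hb : b ∉ M) : ¬ G.Reachable a b := by
  rintro ⟨w⟩; exact hb (walk_stay w h ha)

/-- Connected component of `v` as a set. -/
def cc (G : SimpleGraph V) (v : V) : Set V := {u | G.Reachable v u}

lemma mem_cc_self (G : SimpleGraph V) (v : V) : v ∈ cc G v := SimpleGraph.Reachable.refl v

lemma cc_module (G : SimpleGraph V) (v : V) : G.IsModule (cc G v) := by
  intro u hu
  exact Or.inr fun m hm hadj => hu (hm.trans hadj.symm.reachable)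

lemma cc_eq_of_mem {u v : V} (h : u ∈ cc G v) : cc G u = cc G v := by
  ext z
  exact ⟨fun hz => h.trans hz, fun hz => h.symm.trans hz⟩

lemma cc_eq_cc {x u v : V} (hu : x ∈ cc G u) (hv : x ∈ cc G v) : cc G u = cc G v := by
  rw [← cc_eq_of_mem hu, ← cc_eq_of_mem hv]

lemma isolated_unique {z u : V} (hz : ∀ w, ¬ G.Adj z w) (hu : u ∈ cc G z) : u = z := by
  obtain ⟨w⟩ := hu
  cases w with
  | nil => rfl
  | cons hadj p => exact absurd hadj (hz _)

lemma isolated_of_cc_subsingleton {v : V} (h : ¬ (cc G v).Nontrivial) : ∀ w, ¬ G.Adj v w := by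
  intro w hadj
  rw [Set.not_nontrivial_iff] at h
  exact G.loopless.irrefl v (h hadj.reachable (mem_cc_self G v) ▸ hadj)

lemma exists_adj_of_mem_nontrivial {z v : V} (hz : z ∈ cc G v) (hNT : (cc G v).Nontrivial) :
    ∃ u, G.Adj z u := by
  obtain ⟨a, ha, b, hb, hab⟩ := hNT
  have : ∃ t, t ∈ cc G v ∧ t ≠ z := by
    by_cases haz : a = z
    · exact ⟨b, hb, fun h => hab (haz ▸ h ▸ rfl)⟩
    · exact ⟨a, ha, haz⟩
  obtain ⟨t, ht, htz⟩ := this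
  obtain ⟨w⟩ := hz.symm.trans ht
  cases w with
  | nil => exact absurd rfl htz
  | cons hadj p => exact ⟨_, hadj⟩

lemma cc_ne_univ (h : ¬ G.Preconnected) (v : V) : cc G v ≠ univ := by
  intro he
  rw [SimpleGraph.Preconnected] at h
  push_neg at h
  obtain ⟨a, b, hab⟩ := h
  have ha : a ∈ cc G v := he ▸ mem_univ a
  have hb : b ∈ cc G v := he ▸ mem_univ b
  exact hab (ha.symm.trans hb)

/-- `S` is a good splitter of `C` (relative to the ambient graph `G`). -/
def Good (G : SimpleGraph V) (C S : Set V) : Prop :=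
  S ⊆ C ∧ S.Nonempty ∧
    ∀ M, G.IsModule M → M ⊆ C → M.Nontrivial → (M ∩ S).Nonempty ∧ (M \ S).Nonempty

noncomputable def pick (G : SimpleGraph V) (C : Set V) : Set V :=
  @dite _ (∃ S, Good G C S) (Classical.dec _) (fun h => h.choose) (fun _ => ∅)

lemma pick_good (h : ∃ S, Good G C S) : Good G C (pick G C) := by
  have he : pick G C = h.choose := dif_pos h
  rw [he]; exact h.choose_spec

lemma good_of_induce (hC : C.Nonempty)
    (hs : ∃ S' : Set ↥C, S'.Nonempty ∧ ∀ M', (G.induce C).IsModule M' → M'.Nontrivial →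
      (M' ∩ S').Nonempty ∧ (M' \ S').Nonempty) :
    ∃ S, Good G C S := by
  obtain ⟨S', hS'ne, hS'⟩ := hs
  refine ⟨Subtype.val '' S', by rintro s ⟨s', _, rfl⟩; exact s'.2,
    ⟨hS'ne.choose.1, ⟨hS'ne.choose, hS'ne.choose_spec, rfl⟩⟩, ?_⟩
  intro M hM hMC hMNT
  have hpre : (G.induce C).IsModule (Subtype.val ⁻¹' M) := by
    intro v hv
    rcases hM v.1 hv with h | h
    · exact Or.inl fun m hm => h m.1 hm
    · exact Or.inr fun m hm => h m.1 hm
  have hpreNT : (Subtype.val ⁻¹' M : Set ↥C).Nontrivial := by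
    obtain ⟨x, hx, y, hy, hxy⟩ := hMNT
    exact ⟨⟨x, hMC hx⟩, hx, ⟨y, hMC hy⟩, hy, fun h => hxy (congrArg Subtype.val h)⟩
  obtain ⟨⟨a, ha⟩, ⟨b, hb⟩⟩ := hS' _ hpre hpreNT
  constructor
  · exact ⟨a.1, ha.1, ⟨a, ha.2, rfl⟩⟩
  · refine ⟨b.1, hb.1, ?_⟩
    rintro ⟨b', hb', he⟩
    exact hb.2 (Subtype.ext he ▸ hb')

/-- Maximal proper nonempty module. -/
def IsMaxMod (G : SimpleGraph V) (P : Set V) : Prop :=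
  G.IsModule P ∧ P.Nonempty ∧ P ≠ univ ∧
    ∀ K, G.IsModule K → K ≠ univ → P ⊆ K → K = P

lemma exists_maxMod [Fintype V] (hM : G.IsModule M) (hne : M.Nonempty) (hnu : M ≠ univ) :
    ∃ P, IsMaxMod G P ∧ M ⊆ P := by
  classical
  have hfin : {N : Set V | G.IsModule N ∧ N ≠ univ ∧ M ⊆ N}.Finite := Set.toFinite _
  obtain ⟨P, hP, hmax'⟩ := Set.Finite.exists_maximal hfin ⟨M, hM, hnu, subset_rfl⟩
  have hmax : ∀ K ∈ {N : Set V | G.IsModule N ∧ N ≠ univ ∧ M ⊆ N}, P ⊆ K → P = K :=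
    fun K hK hPK => hPK.antisymm (hmax' hK hPK)
  exact ⟨P, ⟨hP.1, hne.mono hP.2.2, hP.2.1,
    fun K hK hKu hPK => (hmax K ⟨hK, hKu, hP.2.2.trans hPK⟩ hPK).symm⟩, hP.2.2⟩

lemma maxMod_disjoint (hpc : G.Preconnected) (hpcc : Gᶜ.Preconnected) {P Q : Set V}
    (hP : IsMaxMod G P) (hQ : IsMaxMod G Q) (hne : P ≠ Q) {x : V} (hxP : x ∈ P)
    (hxQ : x ∈ Q) : False := by
  have hU : G.IsModule (P ∪ Q) := isModule_union hP.1 hQ.1 ⟨x, hxP, hxQ⟩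
  have hPQ : P ∪ Q = univ := by
    by_contra hne'
    have h1 := hP.2.2.2 (P ∪ Q) hU hne' subset_union_left
    have h2 : Q ⊆ P := by rw [← h1]; exact subset_union_right
    exact hne (hQ.2.2.2 P hP.1 hP.2.2.1 h2)
  obtain ⟨a0, ha0⟩ : (P \ Q).Nonempty := by
    obtain ⟨z, hz⟩ := (ne_univ_iff_exists_notMem Q).mp hQ.2.2.1
    have : z ∈ P ∪ Q := hPQ ▸ mem_univ z
    exact ⟨z, this.resolve_right hz, hz⟩
  obtain ⟨b0, hb0⟩ : (Q \ P).Nonempty := by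
    obtain ⟨z, hz⟩ := (ne_univ_iff_exists_notMem P).mp hP.2.2.1
    have : z ∈ P ∪ Q := hPQ ▸ mem_univ z
    exact ⟨z, this.resolve_left hz, hz⟩
  have key : ∀ u ∈ P \ Q, ∀ p ∈ Q, (G.Adj u p ↔ G.Adj a0 b0) := by
    intro u hu p hp
    calc G.Adj u p ↔ G.Adj u b0 := module_uniform_iff hQ.1 hu.2 hp hb0.1
    _ ↔ G.Adj b0 u := by rw [SimpleGraph.adj_comm]
    _ ↔ G.Adj b0 a0 := module_uniform_iff hP.1 hb0.2 hu.1 ha0.1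
    _ ↔ G.Adj a0 b0 := by rw [SimpleGraph.adj_comm]
  have key2 : ∀ b, b ∉ P → ∀ q ∈ P, (G.Adj b q ↔ G.Adj a0 b0) := by
    intro b hb q hq
    have hbQ : b ∈ Q := ((hPQ ▸ mem_univ b : b ∈ P ∪ Q)).resolve_left hb
    calc G.Adj b q ↔ G.Adj b a0 := module_uniform_iff hP.1 hb hq ha0.1
    _ ↔ G.Adj a0 b := by rw [SimpleGraph.adj_comm]
    _ ↔ G.Adj a0 b0 := module_uniform_iff hQ.1 ha0.2 hbQ hb0.1
  by_cases c : G.Adj a0 b0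
  · refine not_reachable (M := P) (G := Gᶜ) ?_ ha0.1 hb0.2 (hpcc a0 b0)
    intro q hq b hb hadj
    rw [SimpleGraph.compl_adj] at hadj
    exact hadj.2 (((key2 b hb q hq).mpr c).symm)
  · refine not_reachable (M := P) (G := G) ?_ ha0.1 hb0.2 (hpc a0 b0)
    intro q hq b hb hadj
    exact c ((key2 b hb q hq).mp hadj.symm)

lemma maxMod_eq (hpc : G.Preconnected) (hpcc : Gᶜ.Preconnected) {P Q : Set V}
    (hP : IsMaxMod G P) (hQ : IsMaxMod G Q) {x : V} (hxP : x ∈ P) (hxQ : x ∈ Q) : P = Q := by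
  by_contra hne
  exact maxMod_disjoint hpc hpcc hP hQ hne hxP hxQ


section Split

lemma split_disc (hnpc : ¬ G.Preconnected) (hNT : NoTrip G) (hne : Nonempty V)
    (IHg : ∀ C : Set V, G.IsModule C → C ≠ univ → C.Nonempty → ∃ S, Good G C S) :
    ∃ S : Set V, S.Nonempty ∧ ∀ M, G.IsModule M → M.Nontrivial →
      (M ∩ S).Nonempty ∧ (M \ S).Nonempty := by
  classical
  set Siso : Set V := if h : ∃ v, ∀ w, ¬ G.Adj v w then {h.choose} else ∅ with hSiso
  set Sbig : Set V := ⋃ v, if (cc G v).Nontrivial then pick G (cc G v) else ∅ with hSbig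
  have hGood : ∀ v, (cc G v).Nontrivial → Good G (cc G v) (pick G (cc G v)) := by
    intro v hv
    exact pick_good (IHg _ (cc_module G v) (cc_ne_univ hnpc v) ⟨v, mem_cc_self G v⟩)
  have hsubbig : ∀ z, z ∈ Sbig → ∃ v, (cc G v).Nontrivial ∧ z ∈ pick G (cc G v) := by
    intro z hz
    rw [hSbig, mem_iUnion] at hz
    obtain ⟨v, hv⟩ := hz
    by_cases h : (cc G v).Nontrivial
    · rw [if_pos h] at hv; exact ⟨v, h, hv⟩
    · rw [if_neg h] at hv; exact absurd hv (notMem_empty z)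
  have hmembig : ∀ v, (cc G v).Nontrivial → pick G (cc G v) ⊆ Sbig := by
    intro v hv z hz
    rw [hSbig, mem_iUnion]
    exact ⟨v, by rw [if_pos hv]; exact hz⟩
  refine ⟨Siso ∪ Sbig, ?_, ?_⟩
  · by_cases hI : ∃ v, ∀ w, ¬ G.Adj v w
    · exact ⟨hI.choose, Or.inl (by rw [hSiso, dif_pos hI]; exact rfl)⟩
    · push_neg at hI
      obtain ⟨w, hw⟩ := hI hne.some
      have hNT0 : (cc G hne.some).Nontrivial :=
        ⟨hne.some, mem_cc_self G _, w, hw.reachable, hw.ne⟩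
      obtain ⟨s, hs⟩ := (hGood _ hNT0).2.1
      exact ⟨s, Or.inr (hmembig _ hNT0 hs)⟩
  · intro M hM hNTm
    obtain ⟨x, hx, y, hy, hxy⟩ := hNTm
    by_cases hcase : ∃ v, (cc G v).Nontrivial ∧ (M ∩ cc G v).Nontrivial
    · obtain ⟨v, hvNT, hMC⟩ := hcase
      obtain ⟨⟨a, haM, haS⟩, ⟨b, hbM, hbS⟩⟩ := (hGood v hvNT).2.2 (M ∩ cc G v)
        (isModule_inter hM (cc_module G v)) inter_subset_right hMC
      refine ⟨⟨a, haM.1, Or.inr (hmembig v hvNT haS)⟩, ⟨b, hbM.1, ?_⟩⟩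
      rintro (hb | hb)
      · have hbiso : ∀ w, ¬ G.Adj b w := by
          intro w
          rw [hSiso] at hb
          by_cases h : ∃ v, ∀ w, ¬ G.Adj v w
          · rw [dif_pos h] at hb; exact (eq_of_mem_singleton hb) ▸ h.choose_spec w
          · rw [dif_neg h] at hb; exact absurd hb (notMem_empty b)
        obtain ⟨w, hw⟩ := exists_adj_of_mem_nontrivial hbM.2 hvNT
        exact hbiso w hw
      · obtain ⟨u, huNT, hbu⟩ := hsubbig b hb
        have hcc : cc G u = cc G v := cc_eq_cc ((hGood u huNT).1 hbu) hbM.2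
        exact hbS (hcc ▸ hbu)
    · push_neg at hcase
      have hstab : ∀ a ∈ M, ∀ b ∈ M, ¬ G.Adj a b := by
        intro a ha b hb hadj
        have hNTa : (cc G a).Nontrivial := ⟨a, mem_cc_self G a, b, hadj.reachable, hadj.ne⟩
        exact Set.not_nontrivial_iff.mpr (hcase a hNTa) ⟨a, ⟨ha, mem_cc_self G a⟩, b, ⟨hb, hadj.reachable⟩, hadj.ne⟩
      have hisoM : ∀ z ∈ M, ∀ w, ¬ G.Adj z w := by
        intro z hz w hadj
        obtain ⟨z', hz', hzz'⟩ : ∃ z' ∈ M, z' ≠ z :=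
          Set.Nontrivial.exists_ne ⟨x, hx, y, hy, hxy⟩ z
        have hwM : w ∉ M := fun hw => hstab z hz w hw hadj
        have hNTz : (cc G z).Nontrivial := ⟨z, mem_cc_self G z, w, hadj.reachable, hadj.ne⟩
        rcases hM w hwM with hleft | hright
        · exact Set.not_nontrivial_iff.mpr (hcase z hNTz)
            ⟨z, ⟨hz, mem_cc_self G z⟩, z', ⟨hz', hadj.reachable.trans (hleft z' hz').reachable⟩,
              fun he => hzz' he.symm⟩
        · exact hright z hz hadj.symm
      have hI : ∃ v, ∀ w, ¬ G.Adj v w := ⟨x, hisoM x hx⟩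
      have hSisoEq : Siso = {hI.choose} := by rw [hSiso, dif_pos hI]
      have hi0iso : ∀ w, ¬ G.Adj hI.choose w := hI.choose_spec
      have hi0M : hI.choose ∈ M := by
        by_contra h
        have hx0 : x ≠ hI.choose := fun he => h (he ▸ hx)
        have hy0 : y ≠ hI.choose := fun he => h (he ▸ hy)
        have hiso3 : ∀ a ∈ ({x, y, hI.choose} : Set V), ∀ w, ¬ G.Adj a w := by
          intro a ha
          simp only [Set.mem_insert_iff, Set.mem_singleton_iff] at ha
          rcases ha with h | h | h
          · exact h ▸ hisoM x hx
          · exact h ▸ hisoM y hy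
          · exact h ▸ hi0iso
        exact hNT {x, y, hI.choose} (isModule_of_isolated hiso3)
          (Or.inr fun a ha b hb => hiso3 a ha b) x (by simp) y (by simp) hI.choose (by simp)
          hxy hx0 hy0
      obtain ⟨o, ho, hoi⟩ : ∃ o ∈ M, o ≠ hI.choose :=
        Set.Nontrivial.exists_ne ⟨x, hx, y, hy, hxy⟩ hI.choose
      refine ⟨⟨hI.choose, hi0M, Or.inl (by rw [hSisoEq]; exact rfl)⟩, ⟨o, ho, ?_⟩⟩
      rintro (h | h)
      · rw [hSisoEq] at h; exact hoi (eq_of_mem_singleton h)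
      · obtain ⟨u, huNT, hou⟩ := hsubbig o h
        obtain ⟨w, hw⟩ := exists_adj_of_mem_nontrivial ((hGood u huNT).1 hou) huNT
        exact hisoM o ho w hw

lemma split_conn [Fintype V] (hpc : G.Preconnected) (hpcc : Gᶜ.Preconnected)
    (hne : Nonempty V)
    (IHg : ∀ C : Set V, G.IsModule C → C ≠ univ → C.Nonempty → ∃ S, Good G C S) :
    ∃ S : Set V, S.Nonempty ∧ ∀ M, G.IsModule M → M.Nontrivial →
      (M ∩ S).Nonempty ∧ (M \ S).Nonempty := by
  classical
  by_cases hcard : ∀ (u v : V), u = v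
  · refine ⟨univ, univ_nonempty, ?_⟩
    intro M hM hNTm
    obtain ⟨a, _, b, _, hab⟩ := hNTm
    exact absurd (hcard a b) hab
  · push_neg at hcard
    have hsing : ∀ v : V, ({v} : Set V) ≠ univ := by
      intro v he
      obtain ⟨a, b, hab⟩ := hcard
      have ha : a ∈ ({v} : Set V) := he ▸ mem_univ a
      have hb : b ∈ ({v} : Set V) := he ▸ mem_univ b
      exact hab (ha.trans hb.symm)
    have hPm : ∀ v : V, ∃ P, IsMaxMod G P ∧ v ∈ P := by
      intro v
      obtain ⟨P, hP, hvP⟩ := exists_maxMod (isModule_singleton G v) ⟨v, rfl⟩ (hsing v)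
      exact ⟨P, hP, hvP rfl⟩
    set Pmax : V → Set V := fun v => (hPm v).choose with hPmaxDef
    have hPmaxMod : ∀ v, IsMaxMod G (Pmax v) := fun v => (hPm v).choose_spec.1
    have hPmaxMem : ∀ v, v ∈ Pmax v := fun v => (hPm v).choose_spec.2
    have hGoodP : ∀ v, (Pmax v).Nontrivial → Good G (Pmax v) (pick G (Pmax v)) := by
      intro v _
      exact pick_good (IHg _ (hPmaxMod v).1 (hPmaxMod v).2.2.1 (hPmaxMod v).2.1)
    have hMP : ∀ M, G.IsModule M → M ≠ univ → ∀ x ∈ M, M ⊆ Pmax x := by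
      intro M hM hMu x hx
      obtain ⟨P, hP, hMPs⟩ := exists_maxMod hM ⟨x, hx⟩ hMu
      have he : P = Pmax x := maxMod_eq hpc hpcc hP (hPmaxMod x) (hMPs hx) (hPmaxMem x)
      exact he ▸ hMPs
    by_cases hbig : ∃ v, (Pmax v).Nontrivial
    · obtain ⟨v0, hv0⟩ := hbig
      set S : Set V := ⋃ v, if (Pmax v).Nontrivial then pick G (Pmax v) else ∅ with hSdef
      have hsubS : ∀ z, z ∈ S → ∃ u, (Pmax u).Nontrivial ∧ z ∈ pick G (Pmax u) := by
        intro z hz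
        rw [hSdef, mem_iUnion] at hz
        obtain ⟨v, hv⟩ := hz
        by_cases h : (Pmax v).Nontrivial
        · rw [if_pos h] at hv; exact ⟨v, h, hv⟩
        · rw [if_neg h] at hv; exact absurd hv (notMem_empty z)
      have hmemS : ∀ v, (Pmax v).Nontrivial → pick G (Pmax v) ⊆ S := by
        intro v hv z hz
        rw [hSdef, mem_iUnion]
        exact ⟨v, by rw [if_pos hv]; exact hz⟩
      have hSP : ∀ v, (Pmax v).Nontrivial → ∀ z ∈ Pmax v, z ∉ pick G (Pmax v) → z ∉ S := by
        intro v hv z hzP hzp hzS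
        obtain ⟨u, huNT, hzu⟩ := hsubS z hzS
        have he : Pmax u = Pmax v :=
          maxMod_eq hpc hpcc (hPmaxMod u) (hPmaxMod v) ((hGoodP u huNT).1 hzu) hzP
        exact hzp (he ▸ hzu)
      obtain ⟨s0, hs0⟩ := (hGoodP v0 hv0).2.1
      refine ⟨S, ⟨s0, hmemS v0 hv0 hs0⟩, ?_⟩
      intro M hM hNTm
      by_cases hMu : M = univ
      · subst hMu
        obtain ⟨⟨a, _, haS⟩, ⟨b, hbP, hbS⟩⟩ := (hGoodP v0 hv0).2.2 (Pmax v0)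
          (hPmaxMod v0).1 subset_rfl hv0
        exact ⟨⟨a, mem_univ a, hmemS v0 hv0 haS⟩,
          ⟨b, mem_univ b, hSP v0 hv0 b hbP hbS⟩⟩
      · obtain ⟨x, hx⟩ : M.Nonempty := hNTm.nonempty
        have hMsub := hMP M hM hMu x hx
        have hPxNT : (Pmax x).Nontrivial := hNTm.mono hMsub
        obtain ⟨⟨a, haM, haS⟩, ⟨b, hbM, hbS⟩⟩ := (hGoodP x hPxNT).2.2 M hM hMsub hNTm
        exact ⟨⟨a, haM, hmemS x hPxNT haS⟩, ⟨b, hbM, hSP x hPxNT b (hMsub hbM) hbS⟩⟩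
    · obtain ⟨a, b, hab⟩ := hcard
      refine ⟨{a}, singleton_nonempty a, ?_⟩
      intro M hM hNTm
      by_cases hMu : M = univ
      · subst hMu
        exact ⟨⟨a, mem_univ a, rfl⟩,
          ⟨b, mem_univ b, fun h => hab (eq_of_mem_singleton h).symm⟩⟩
      · obtain ⟨x, hx⟩ : M.Nonempty := hNTm.nonempty
        exact absurd (hNTm.mono (hMP M hM hMu x hx)) (by push_neg at hbig; exact Set.not_nontrivial_iff.mpr (hbig x))

theorem split_main : ∀ (n : ℕ) (K : Type u) [Fintype K] (G : SimpleGraph K),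
    Fintype.card K = n → Nonempty K → NoTrip G →
    ∃ S : Set K, S.Nonempty ∧ ∀ M, G.IsModule M → M.Nontrivial →
      (M ∩ S).Nonempty ∧ (M \ S).Nonempty := by
  intro n
  induction n using Nat.strong_induction_on with
  | _ n IH =>
    intro K _ G hcard hne hNT
    classical
    have IHg : ∀ (G' : SimpleGraph K), NoTrip G' → ∀ C : Set K, G'.IsModule C → C ≠ univ →
        C.Nonempty → ∃ S, Good G' C S := by
      intro G' hNT' C hmod hCu hCne
      obtain ⟨x, hx⟩ := (ne_univ_iff_exists_notMem C).mp hCu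
      have hlt : Fintype.card ↥C < n := hcard ▸ Fintype.card_subtype_lt (x := x) hx
      obtain ⟨S', hS'⟩ := IH _ hlt ↥C (G'.induce C) rfl hCne.to_subtype (hNT'.induce hmod)
      exact good_of_induce hCne ⟨S', hS'.1, hS'.2⟩
    by_cases hpc : G.Preconnected
    · by_cases hpcc : Gᶜ.Preconnected
      · exact split_conn hpc hpcc hne (IHg G hNT)
      · obtain ⟨S, hS1, hS2⟩ := split_disc (G := Gᶜ) hpcc hNT.compl hne (IHg Gᶜ hNT.compl)
        exact ⟨S, hS1, fun M hM hMn => hS2 M (module_compl hM) hMn⟩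
    · exact split_disc hpc hNT hne (IHg G hNT)

end Split

section Ext

/-- Splitter condition (1). -/
def SplitsAll (G : SimpleGraph V) (S : Set V) : Prop :=
  ∀ M, G.IsModule M → M.Nontrivial → (M ∩ S).Nonempty ∧ (M \ S).Nonempty

/-- Condition (2): no module together with the new vertex forms a module. -/
def Cond2 (G : SimpleGraph V) (S : Set V) : Prop :=
  ∀ M, G.IsModule M → M.Nonempty → M ≠ univ →
    S \ M ≠ {v | v ∉ M ∧ ∀ m ∈ M, G.Adj v m}

/-- One-vertex extension of `G`, the new vertex being adjacent exactly to `S`. -/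
def ext1 (G : SimpleGraph V) (S : Set V) : SimpleGraph (V ⊕ Fin 1) where
  Adj x y :=
    Sum.elim (fun u => Sum.elim (fun v => G.Adj u v) (fun _ => u ∈ S) y)
             (fun _ => Sum.elim (fun v => v ∈ S) (fun _ => False) y) x
  symm := by
    constructor
    rintro (u | i) (v | j) h
    · exact G.symm.symm _ _ h
    · exact h
    · exact h
    · exact h.elim
  loopless := by
    constructor
    rintro (u | i) h
    · exact G.loopless.irrefl u h
    · exact h

lemma ext1_isExtension (G : SimpleGraph V) (S : Set V) : G.IsExtension (ext1 G S) :=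
  fun _ _ => Iff.rfl

lemma ext1_prime [Fintype V] {S : Set V} (h3 : 3 ≤ Fintype.card V) (hS : SplitsAll G S)
    (hC : Cond2 G S) : (ext1 G S).IsPrimeGraph := by
  constructor
  · rw [Fintype.card_sum, Fintype.card_fin]; omega
  · intro N hN
    have hMmod : G.IsModule (Sum.inl ⁻¹' N) := by
      intro v hv
      rcases hN (Sum.inl v) hv with h | h
      · exact Or.inl fun m hm => h (Sum.inl m) hm
      · exact Or.inr fun m hm => h (Sum.inl m) hm
    by_cases hw : (Sum.inr 0 : V ⊕ Fin 1) ∈ N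
    · by_cases hM0 : Sum.inl ⁻¹' N = (∅ : Set V)
      · refine Or.inr (Or.inl ⟨Sum.inr 0, ?_⟩)
        ext z
        cases z with
        | inl u =>
            have hu : u ∉ Sum.inl ⁻¹' N := hM0 ▸ notMem_empty u
            simp only [mem_singleton_iff]
            exact ⟨fun h => absurd h hu, fun h => absurd h (by simp)⟩
        | inr i =>
            have : i = 0 := Fin.eq_zero i
            subst this
            simp [hw]
      · by_cases hMu : Sum.inl ⁻¹' N = (univ : Set V)
        · refine Or.inr (Or.inr ?_)
          ext z
          cases z with
          | inl u => simp only [mem_univ, iff_true]; exact (hMu ▸ mem_univ u : u ∈ Sum.inl ⁻¹' N)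
          | inr i =>
              have : i = 0 := Fin.eq_zero i
              subst this
              simp only [mem_univ, iff_true]; exact hw
        · exfalso
          apply hC _ hMmod (nonempty_iff_ne_empty.mpr hM0) hMu
          ext v
          constructor
          · rintro ⟨hvS, hvM⟩
            refine ⟨hvM, fun m hm => ?_⟩
            rcases hN (Sum.inl v) hvM with h | h
            · exact h (Sum.inl m) hm
            · exact absurd hvS (h (Sum.inr 0) hw)
          · rintro ⟨hvM, hcomp⟩
            refine ⟨?_, hvM⟩
            rcases hN (Sum.inl v) hvM with h | h
            · exact h (Sum.inr 0) hw
            · obtain ⟨m0, hm0⟩ := nonempty_iff_ne_empty.mpr hM0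
              exact absurd (hcomp m0 hm0) (h (Sum.inl m0) hm0)
    · have hNM : N = Sum.inl '' (Sum.inl ⁻¹' N) := by
        ext z
        cases z with
        | inl u =>
            constructor
            · intro h; exact ⟨u, h, rfl⟩
            · rintro ⟨u', hu', he⟩; cases he; exact hu'
        | inr i =>
            have : i = 0 := Fin.eq_zero i
            subst this
            constructor
            · intro h; exact absurd h hw
            · rintro ⟨u', _, he⟩; exact absurd he (by simp)
      by_cases hMNT : (Sum.inl ⁻¹' N : Set V).Nontrivial
      · exfalso
        obtain ⟨⟨a, haM, haS⟩, ⟨b, hbM, hbS⟩⟩ := hS _ hMmod hMNT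
        rcases hN (Sum.inr 0) hw with h | h
        · exact hbS (h (Sum.inl b) hbM)
        · exact h (Sum.inl a) haM haS
      · rw [Set.not_nontrivial_iff] at hMNT
        rcases hMNT.eq_empty_or_singleton with h | ⟨v, hv⟩
        · left; rw [hNM, h]; simp
        · right; left; exact ⟨Sum.inl v, by rw [hNM, hv, Set.image_singleton]⟩

end Ext

section OneExt

lemma one_ext_disc [Fintype V] (hnpc : ¬ G.Preconnected) (hNT : NoTrip G)
    (hiso : {v : V | ∀ w, ¬ G.Adj v w}.Subsingleton) (hne : Nonempty V) :
    ∃ S : Set V, SplitsAll G S ∧ Cond2 G S := by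
  classical
  have hGoodEx : ∀ v : V, (cc G v).Nontrivial → Good G (cc G v) (pick G (cc G v)) := by
    intro v _
    refine pick_good (good_of_induce ⟨v, mem_cc_self G v⟩ ?_)
    obtain ⟨S', hS'⟩ := split_main (Fintype.card ↥(cc G v)) ↥(cc G v) (G.induce (cc G v)) rfl
      (Set.Nonempty.to_subtype ⟨v, mem_cc_self G v⟩) (hNT.induce (cc_module G v))
    exact ⟨S', hS'.1, hS'.2⟩
  set Sbig : Set V := ⋃ v, if (cc G v).Nontrivial then pick G (cc G v) else ∅ with hSbigDef
  set S : Set V := {v | ∀ w, ¬ G.Adj v w} ∪ Sbig with hSdef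
  have hsubbig : ∀ z, z ∈ Sbig → ∃ v, (cc G v).Nontrivial ∧ z ∈ pick G (cc G v) := by
    intro z hz
    rw [hSbigDef, mem_iUnion] at hz
    obtain ⟨v, hv⟩ := hz
    by_cases h : (cc G v).Nontrivial
    · rw [if_pos h] at hv; exact ⟨v, h, hv⟩
    · rw [if_neg h] at hv; exact absurd hv (notMem_empty z)
  have hmembig : ∀ v, (cc G v).Nontrivial → pick G (cc G v) ⊆ Sbig := by
    intro v hv z hz
    rw [hSbigDef, mem_iUnion]
    exact ⟨v, by rw [if_pos hv]; exact hz⟩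
  have hmeet : ∀ v : V, (S ∩ cc G v).Nonempty := by
    intro v
    by_cases h : (cc G v).Nontrivial
    · obtain ⟨s, hs⟩ := (hGoodEx v h).2.1
      exact ⟨s, Or.inr (hmembig v h hs), (hGoodEx v h).1 hs⟩
    · exact ⟨v, Or.inl (isolated_of_cc_subsingleton h), mem_cc_self G v⟩
  refine ⟨S, ?_, ?_⟩
  · intro M hM hNTm
    obtain ⟨x, hx, y, hy, hxy⟩ := hNTm
    by_cases hcase : ∃ v, (cc G v).Nontrivial ∧ (M ∩ cc G v).Nontrivial
    · obtain ⟨v, hvNT, hMC⟩ := hcase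
      obtain ⟨⟨a, haM, haS⟩, ⟨b, hbM, hbS⟩⟩ := (hGoodEx v hvNT).2.2 (M ∩ cc G v)
        (isModule_inter hM (cc_module G v)) inter_subset_right hMC
      refine ⟨⟨a, haM.1, Or.inr (hmembig v hvNT haS)⟩, ⟨b, hbM.1, ?_⟩⟩
      rintro (hb | hb)
      · obtain ⟨w, hw⟩ := exists_adj_of_mem_nontrivial hbM.2 hvNT
        exact hb w hw
      · obtain ⟨u, huNT, hbu⟩ := hsubbig b hb
        have hcc : cc G u = cc G v := cc_eq_cc ((hGoodEx u huNT).1 hbu) hbM.2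
        exact hbS (hcc ▸ hbu)
    · push_neg at hcase
      exfalso
      have hstab : ∀ a ∈ M, ∀ b ∈ M, ¬ G.Adj a b := by
        intro a ha b hb hadj
        have hNTa : (cc G a).Nontrivial := ⟨a, mem_cc_self G a, b, hadj.reachable, hadj.ne⟩
        exact Set.not_nontrivial_iff.mpr (hcase a hNTa) ⟨a, ⟨ha, mem_cc_self G a⟩, b, ⟨hb, hadj.reachable⟩, hadj.ne⟩
      have hisoM : ∀ z ∈ M, ∀ w, ¬ G.Adj z w := by
        intro z hz w hadj
        obtain ⟨z', hz', hzz'⟩ : ∃ z' ∈ M, z' ≠ z :=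
          Set.Nontrivial.exists_ne ⟨x, hx, y, hy, hxy⟩ z
        have hwM : w ∉ M := fun hw => hstab z hz w hw hadj
        have hNTz : (cc G z).Nontrivial := ⟨z, mem_cc_self G z, w, hadj.reachable, hadj.ne⟩
        rcases hM w hwM with hleft | hright
        · exact Set.not_nontrivial_iff.mpr (hcase z hNTz)
            ⟨z, ⟨hz, mem_cc_self G z⟩, z', ⟨hz', hadj.reachable.trans (hleft z' hz').reachable⟩,
              fun he => hzz' he.symm⟩
        · exact hright z hz hadj.symm
      exact hxy (hiso (hisoM x hx) (hisoM y hy))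
  · intro M hM hMne hMu heq
    obtain ⟨m0, hm0⟩ := hMne
    obtain ⟨z0, hz0⟩ := (ne_univ_iff_exists_notMem M).mp hMu
    have hNsub : ∀ m ∈ M, {v | v ∉ M ∧ ∀ m' ∈ M, G.Adj v m'} ⊆ cc G m := by
      intro m hm v hv
      exact (hv.2 m hm).symm.reachable
    by_cases hsp : ∃ m1 ∈ M, ∃ m2 ∈ M, cc G m1 ≠ cc G m2
    · obtain ⟨m1, hm1, m2, hm2, h12⟩ := hsp
      have hNempty : {v | v ∉ M ∧ ∀ m' ∈ M, G.Adj v m'} = (∅ : Set V) := by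
        ext v
        simp only [mem_empty_iff_false, iff_false]
        intro hv
        exact h12 (cc_eq_cc (hNsub m1 hm1 hv) (hNsub m2 hm2 hv))
      rw [hNempty] at heq
      have hSM : S ⊆ M := diff_eq_empty.mp heq
      have hanti : ∀ z, z ∉ M → ∀ m ∈ M, ¬ G.Adj z m := by
        intro z hz
        obtain ⟨mi, hmi, hmiz⟩ : ∃ mi ∈ M, cc G mi ≠ cc G z := by
          by_cases h1 : cc G m1 = cc G z
          · exact ⟨m2, hm2, fun h2 => h12 (h1.trans h2.symm)⟩
          · exact ⟨m1, hm1, h1⟩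
        have hnadj : ¬ G.Adj z mi := fun hadj => hmiz (cc_eq_of_mem hadj.reachable)
        intro m hm hadj
        exact hnadj ((module_uniform_iff hM hz hm hmi).mp hadj)
      obtain ⟨s, hsS, hscc⟩ := hmeet z0
      exact not_reachable (M := M) (fun a ha b hb hadj => hanti b hb a ha hadj.symm)
        (hSM hsS) hz0 hscc.symm
    · push_neg at hsp
      have hMcc : M ⊆ cc G m0 := by
        intro m hm
        exact (hsp m hm m0 hm0) ▸ mem_cc_self G m
      rw [SimpleGraph.Preconnected] at hnpc
      push_neg at hnpc
      obtain ⟨a, b, hab⟩ := hnpc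
      obtain ⟨u, hucc⟩ : ∃ u : V, cc G u ≠ cc G m0 := by
        by_cases h1 : cc G a = cc G m0
        · refine ⟨b, fun h2 => hab ?_⟩
          have ha' : a ∈ cc G m0 := h1 ▸ mem_cc_self G a
          have hb' : b ∈ cc G m0 := h2 ▸ mem_cc_self G b
          exact ha'.symm.trans hb'
        · exact ⟨a, h1⟩
      obtain ⟨s, hsS, hscc⟩ := hmeet u
      have hsnot : s ∉ cc G m0 := fun h => hucc (cc_eq_cc hscc h)
      have hsM : s ∉ M := fun h => hsnot (hMcc h)
      have hsN : s ∈ {v | v ∉ M ∧ ∀ m' ∈ M, G.Adj v m'} := heq ▸ ⟨hsS, hsM⟩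
      exact hsnot (hNsub m0 hm0 hsN)

end OneExt

lemma one_ext_conn [Fintype V] (h3 : 3 ≤ Fintype.card V) (hNT : NoTrip G)
    (hpc : G.Preconnected) (hpcc : Gᶜ.Preconnected) :
    ∃ S : Set V, SplitsAll G S ∧ Cond2 G S := by
  classical
  have hne : Nonempty V := Fintype.card_pos_iff.mp (by omega)
  obtain ⟨a0, b0, hab0⟩ : ∃ a b : V, a ≠ b := Fintype.one_lt_card_iff.mp (by omega)
  have hsing : ∀ v : V, ({v} : Set V) ≠ univ := by
    intro v he
    have ha : a0 ∈ ({v} : Set V) := he ▸ mem_univ a0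
    have hb : b0 ∈ ({v} : Set V) := he ▸ mem_univ b0
    exact hab0 (ha.trans hb.symm)
  have hPm : ∀ v : V, ∃ P, IsMaxMod G P ∧ v ∈ P := by
    intro v
    obtain ⟨P, hP, hvP⟩ := exists_maxMod (isModule_singleton G v) ⟨v, rfl⟩ (hsing v)
    exact ⟨P, hP, hvP rfl⟩
  set Pmax : V → Set V := fun v => (hPm v).choose with hPmaxDef
  have hPmaxMod : ∀ v, IsMaxMod G (Pmax v) := fun v => (hPm v).choose_spec.1
  have hPmaxMem : ∀ v, v ∈ Pmax v := fun v => (hPm v).choose_spec.2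
  have hGoodP : ∀ v, (Pmax v).Nontrivial → Good G (Pmax v) (pick G (Pmax v)) := by
    intro v _
    refine pick_good (good_of_induce (hPmaxMod v).2.1 ?_)
    obtain ⟨S', hS'⟩ := split_main (Fintype.card ↥(Pmax v)) ↥(Pmax v) (G.induce (Pmax v)) rfl
      (Set.Nonempty.to_subtype (hPmaxMod v).2.1) (hNT.induce (hPmaxMod v).1)
    exact ⟨S', hS'.1, hS'.2⟩
  have hMP : ∀ M, G.IsModule M → M ≠ univ → ∀ x ∈ M, M ⊆ Pmax x := by
    intro M hM hMu x hx
    obtain ⟨P, hP, hMPs⟩ := exists_maxMod hM ⟨x, hx⟩ hMu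
    have he : P = Pmax x := maxMod_eq hpc hpcc hP (hPmaxMod x) (hMPs hx) (hPmaxMem x)
    exact he ▸ hMPs
  have hNconst : ∀ M R : Set V, G.IsModule R → M ∩ R = ∅ → ∀ s ∈ R, ∀ z ∈ R,
      s ∈ {v | v ∉ M ∧ ∀ m ∈ M, G.Adj v m} → z ∈ {v | v ∉ M ∧ ∀ m ∈ M, G.Adj v m} := by
    intro M R hR hMR s hs z hz hsN
    refine ⟨fun hzM => (eq_empty_iff_forall_notMem.mp hMR z) ⟨hzM, hz⟩, fun m hm => ?_⟩
    have hmR : m ∉ R := fun h => (eq_empty_iff_forall_notMem.mp hMR m) ⟨hm, h⟩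
    have hiff := module_uniform_iff hR hmR hs hz
    rw [G.adj_comm m s, G.adj_comm m z] at hiff
    exact hiff.mp (hsN.2 m hm)
  by_cases hbig : ∃ v, (Pmax v).Nontrivial
  · by_cases huniq : ∀ u, (Pmax u).Nontrivial → Pmax u = Pmax hbig.choose
    · -- unique big part
      set P1 : Set V := Pmax hbig.choose with hP1def
      have hP1NT : P1.Nontrivial := hbig.choose_spec
      have hP1max : IsMaxMod G P1 := hPmaxMod _
      have hGood1 : Good G P1 (pick G P1) := hGoodP _ hP1NT
      obtain ⟨x0, hx0⟩ := (ne_univ_iff_exists_notMem P1).mp hP1max.2.2.1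
      set S0 : Set V := if ∀ m ∈ P1, G.Adj x0 m then ∅ else {x0} with hS0def
      set S : Set V := pick G P1 ∪ S0 with hSdef
      have hS0sub : S0 ⊆ {x0} := by
        rw [hS0def]; split
        · exact empty_subset _
        · exact subset_rfl
      have hpickP1 : pick G P1 ⊆ P1 := hGood1.1
      obtain ⟨⟨a1, ha1P, ha1S⟩, ⟨b1, hb1P, hb1S⟩⟩ :=
        hGood1.2.2 P1 hP1max.1 subset_rfl hP1NT
      have hdicho : ∀ M, G.IsModule M → M.Nonempty → M ≠ univ → M ⊆ P1 ∨ M ∩ P1 = ∅ := by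
        intro M hM hMne hMu
        obtain ⟨x, hx⟩ := hMne
        have hsub := hMP M hM hMu x hx
        by_cases h : Pmax x = P1
        · exact Or.inl (h ▸ hsub)
        · refine Or.inr (eq_empty_iff_forall_notMem.mpr fun z hz => ?_)
          exact maxMod_disjoint hpc hpcc (hPmaxMod x) hP1max h (hsub hz.1) hz.2
      refine ⟨S, ?_, ?_⟩
      · intro M hM hNTm
        by_cases hMu : M = univ
        · subst hMu
          refine ⟨⟨a1, mem_univ a1, Or.inl ha1S⟩, ⟨b1, mem_univ b1, ?_⟩⟩
          rintro (h | h)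
          · exact hb1S h
          · exact hx0 ((hS0sub h) ▸ hb1P)
        · rcases hdicho M hM hNTm.nonempty hMu with hsub | hdisj
          · obtain ⟨⟨a, haM, haS⟩, ⟨b, hbM, hbS⟩⟩ := hGood1.2.2 M hM hsub hNTm
            refine ⟨⟨a, haM, Or.inl haS⟩, ⟨b, hbM, ?_⟩⟩
            rintro (h | h)
            · exact hbS h
            · exact hx0 ((hS0sub h) ▸ hsub hbM)
          · exfalso
            obtain ⟨x, hx⟩ := hNTm.nonempty
            have hsub := hMP M hM hMu x hx
            have hPNT : (Pmax x).Nontrivial := hNTm.mono hsub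
            have heqP : Pmax x = P1 := huniq x hPNT
            exact (eq_empty_iff_forall_notMem.mp hdisj x) ⟨hx, heqP ▸ hsub hx⟩
      · intro M hM hMne hMu heq
        rcases hdicho M hM hMne hMu with hsub | hdisj
        · have hx0M : x0 ∉ M := fun h => hx0 (hsub h)
          have hx0pick : x0 ∉ pick G P1 := fun h => hx0 (hpickP1 h)
          rcases hP1max.1 x0 hx0 with hcomp | hanti
          · have hS0e : S0 = ∅ := by rw [hS0def, if_pos hcomp]
            have hx0N : x0 ∈ {v | v ∉ M ∧ ∀ m ∈ M, G.Adj v m} :=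
              ⟨hx0M, fun m hm => hcomp m (hsub hm)⟩
            rw [← heq] at hx0N
            rcases hx0N.1 with h | h
            · exact hx0pick h
            · exact notMem_empty x0 (hS0e ▸ h)
          · have hS0e : S0 = {x0} := by
              rw [hS0def, if_neg ?_]
              intro hall
              obtain ⟨m1, hm1⟩ := hP1NT.nonempty
              exact hanti m1 hm1 (hall m1 hm1)
            have hx0S : x0 ∈ S \ M := ⟨Or.inr (hS0e ▸ rfl), hx0M⟩
            rw [heq] at hx0S
            obtain ⟨m0, hm0⟩ := hMne
            exact hanti m0 (hsub hm0) (hx0S.2 m0 hm0)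
        · have haM : a1 ∉ M := fun h => (eq_empty_iff_forall_notMem.mp hdisj a1) ⟨h, ha1P⟩
          have haSM : a1 ∈ S \ M := ⟨Or.inl ha1S, haM⟩
          rw [heq] at haSM
          have hbN := hNconst M P1 hP1max.1 hdisj a1 ha1P b1 hb1P haSM
          rw [← heq] at hbN
          rcases hbN.1 with h | h
          · exact hb1S h
          · exact hx0 ((hS0sub h) ▸ hb1P)
    · push_neg at huniq
      obtain ⟨u1, hu1NT, hu1ne⟩ := huniq
      have hv0NT : (Pmax hbig.choose).Nontrivial := hbig.choose_spec
      set S : Set V := ⋃ v, if (Pmax v).Nontrivial then pick G (Pmax v) else ∅ with hSdef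
      have hsubS : ∀ z, z ∈ S → ∃ u, (Pmax u).Nontrivial ∧ z ∈ pick G (Pmax u) := by
        intro z hz
        rw [hSdef, mem_iUnion] at hz
        obtain ⟨v, hv⟩ := hz
        by_cases h : (Pmax v).Nontrivial
        · rw [if_pos h] at hv; exact ⟨v, h, hv⟩
        · rw [if_neg h] at hv; exact absurd hv (notMem_empty z)
      have hmemS : ∀ v, (Pmax v).Nontrivial → pick G (Pmax v) ⊆ S := by
        intro v hv z hz
        rw [hSdef, mem_iUnion]
        exact ⟨v, by rw [if_pos hv]; exact hz⟩
      have hSP : ∀ v, (Pmax v).Nontrivial → ∀ z ∈ Pmax v, z ∉ pick G (Pmax v) → z ∉ S := by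
        intro v hv z hzP hzp hzS
        obtain ⟨u, huNT, hzu⟩ := hsubS z hzS
        have he : Pmax u = Pmax v :=
          maxMod_eq hpc hpcc (hPmaxMod u) (hPmaxMod v) ((hGoodP u huNT).1 hzu) hzP
        exact hzp (he ▸ hzu)
      refine ⟨S, ?_, ?_⟩
      · intro M hM hNTm
        by_cases hMu : M = univ
        · subst hMu
          obtain ⟨⟨a, haP, haS⟩, ⟨b, hbP, hbS⟩⟩ := (hGoodP _ hv0NT).2.2 (Pmax hbig.choose)
            (hPmaxMod _).1 subset_rfl hv0NT
          exact ⟨⟨a, mem_univ a, hmemS _ hv0NT haS⟩,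
            ⟨b, mem_univ b, hSP _ hv0NT b hbP hbS⟩⟩
        · obtain ⟨x, hx⟩ : M.Nonempty := hNTm.nonempty
          have hMsub := hMP M hM hMu x hx
          have hPxNT : (Pmax x).Nontrivial := hNTm.mono hMsub
          obtain ⟨⟨a, haM, haS⟩, ⟨b, hbM, hbS⟩⟩ := (hGoodP x hPxNT).2.2 M hM hMsub hNTm
          exact ⟨⟨a, haM, hmemS x hPxNT haS⟩, ⟨b, hbM, hSP x hPxNT b (hMsub hbM) hbS⟩⟩
      · intro M hM hMne hMu heq
        obtain ⟨x, hx⟩ := hMne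
        have hsub := hMP M hM hMu x hx
        obtain ⟨r, hrNT, hrne⟩ : ∃ r, (Pmax r).Nontrivial ∧ Pmax r ≠ Pmax x := by
          by_cases h : Pmax hbig.choose = Pmax x
          · exact ⟨u1, hu1NT, fun he => hu1ne (he.trans h.symm)⟩
          · exact ⟨hbig.choose, hv0NT, h⟩
        have hdisj : M ∩ Pmax r = ∅ := by
          refine eq_empty_iff_forall_notMem.mpr fun z hz => ?_
          exact maxMod_disjoint hpc hpcc (hPmaxMod x) (hPmaxMod r)
            (fun he => hrne he.symm) (hsub hz.1) hz.2
        obtain ⟨⟨a, haP, haS⟩, ⟨b, hbP, hbS⟩⟩ := (hGoodP r hrNT).2.2 (Pmax r)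
          (hPmaxMod r).1 subset_rfl hrNT
        have haM : a ∉ M := fun h => (eq_empty_iff_forall_notMem.mp hdisj a) ⟨h, haP⟩
        have haSM : a ∈ S \ M := ⟨hmemS r hrNT haS, haM⟩
        rw [heq] at haSM
        have hbN := hNconst M (Pmax r) (hPmaxMod r).1 hdisj a haP b hbP haSM
        rw [← heq] at hbN
        exact (hSP r hrNT b hbP hbS) hbN.1
  · -- no big parts: G is quasi-prime, use a counting argument
    push_neg at hbig
    have hsmall : ∀ M, G.IsModule M → M ≠ univ → ∀ x ∈ M, ∀ y ∈ M, x = y := by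
      intro M hM hMu x hx y hy
      by_contra hxy
      exact absurd (Set.Nontrivial.mono (s := M) ⟨x, hx, y, hy, hxy⟩ (hMP M hM hMu x hx)) (Set.not_nontrivial_iff.mpr (hbig x))
    have h4 : 4 ≤ Fintype.card V := by
      by_contra h4
      have h3' : (Finset.univ : Finset V).card = 3 := by rw [Finset.card_univ]; omega
      obtain ⟨x, y, z, hxy, hxz, hyz, huniv⟩ := Finset.card_eq_three.mp h3'
      have hall : ∀ w : V, w = x ∨ w = y ∨ w = z := by
        intro w
        have hw : w ∈ (Finset.univ : Finset V) := Finset.mem_univ w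
        rw [huniv] at hw
        simpa using hw
      have hmod2 : ∀ a b c : V, a ≠ b → c ≠ a → c ≠ b → (∀ w : V, w = a ∨ w = b ∨ w = c) →
          (G.Adj c a ↔ G.Adj c b) → False := by
        intro a b c hab hca hcb hcover hiff
        have hMab : G.IsModule {a, b} := by
          intro v hv
          simp only [mem_insert_iff, mem_singleton_iff] at hv
          push_neg at hv
          have hvc : v = c := by
            rcases hcover v with h | h | h
            · exact absurd h hv.1
            · exact absurd h hv.2
            · exact h
          subst hvc
          by_cases h : G.Adj v a
          · refine Or.inl ?_
            intro m hm
            simp only [mem_insert_iff, mem_singleton_iff] at hm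
            rcases hm with rfl | rfl
            · exact h
            · exact hiff.mp h
          · refine Or.inr ?_
            intro m hm
            simp only [mem_insert_iff, mem_singleton_iff] at hm
            rcases hm with rfl | rfl
            · exact h
            · exact fun hc => h (hiff.mpr hc)
        have hprop : ({a, b} : Set V) ≠ univ := by
          intro he
          have : c ∈ ({a, b} : Set V) := he ▸ mem_univ c
          simp only [mem_insert_iff, mem_singleton_iff] at this
          rcases this with h | h
          · exact hca h
          · exact hcb h
        exact hab (hsmall {a, b} hMab hprop a (by simp) b (by simp))
      by_cases h1 : G.Adj z x ↔ G.Adj z y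
      · exact hmod2 x y z hxy (Ne.symm hxz) (Ne.symm hyz) hall h1
      · by_cases h2 : G.Adj y x ↔ G.Adj y z
        · exact hmod2 x z y hxz (Ne.symm hxy) hyz
            (fun w => by rcases hall w with h | h | h; exacts [Or.inl h, Or.inr (Or.inr h), Or.inr (Or.inl h)]) h2
        · by_cases h3' : G.Adj x y ↔ G.Adj x z
          · exact hmod2 y z x hyz hxy hxz
              (fun w => by rcases hall w with h | h | h; exacts [Or.inr (Or.inr h), Or.inl h, Or.inr (Or.inl h)]) h3'
          · rw [G.adj_comm z x, G.adj_comm z y] at h1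
            rw [G.adj_comm y x] at h2
            tauto
    -- counting
    set B : Finset (Finset V) := insert ∅ (insert Finset.univ
      (Finset.univ.biUnion fun v => {G.neighborFinset v, insert v (G.neighborFinset v)}))
      with hBdef
    have hcardB : B.card ≤ 2 + 2 * Fintype.card V := by
      have hb1 : (Finset.univ.biUnion fun v : V =>
          ({G.neighborFinset v, insert v (G.neighborFinset v)} : Finset (Finset V))).card
          ≤ 2 * Fintype.card V := by
        refine le_trans (Finset.card_biUnion_le) ?_
        have : ∀ v : V, ({G.neighborFinset v, insert v (G.neighborFinset v)} :
            Finset (Finset V)).card ≤ 2 := by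
          intro v
          refine le_trans (Finset.card_insert_le _ _) ?_
          simp
        calc (Finset.univ : Finset V).sum (fun v =>
            ({G.neighborFinset v, insert v (G.neighborFinset v)} : Finset (Finset V)).card)
            ≤ (Finset.univ : Finset V).sum (fun _ => 2) := Finset.sum_le_sum fun v _ => this v
        _ = 2 * Fintype.card V := by rw [Finset.sum_const, Finset.card_univ, smul_eq_mul,
            Nat.mul_comm]
      have hb2 := Finset.card_insert_le Finset.univ
        (Finset.univ.biUnion fun v : V =>
          ({G.neighborFinset v, insert v (G.neighborFinset v)} : Finset (Finset V)))
      have hb3 := Finset.card_insert_le (∅ : Finset V) (insert Finset.univ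
        (Finset.univ.biUnion fun v : V =>
          ({G.neighborFinset v, insert v (G.neighborFinset v)} : Finset (Finset V))))
      rw [hBdef]
      omega
    have hpow : 2 + 2 * Fintype.card V < 2 ^ Fintype.card V := by
      have haux : ∀ n : ℕ, 4 ≤ n → 2 + 2 * n < 2 ^ n := by
        intro n hn
        induction n with
        | zero => omega
        | succ m ih =>
          by_cases hm : m < 4
          · have : m = 3 := by omega
            subst this
            norm_num
          · have h1 := ih (by omega)
            have h2 : 2 ^ (m + 1) = 2 ^ m + 2 ^ m := by rw [pow_succ]; ring
            omega
      exact haux _ h4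
    obtain ⟨Sf, hSf⟩ : ∃ Sf : Finset V, Sf ∉ B := by
      by_contra hall
      push_neg at hall
      have hsub : (Finset.univ : Finset (Finset V)) ⊆ B := fun s _ => hall s
      have hc := Finset.card_le_card hsub
      rw [Finset.card_univ, Fintype.card_finset] at hc
      omega
    have hSne : Sf ≠ ∅ := fun h => hSf (h ▸ Finset.mem_insert_self _ _)
    have hSnu : Sf ≠ Finset.univ := by
      intro h
      exact hSf (h ▸ Finset.mem_insert_of_mem (Finset.mem_insert_self _ _))
    refine ⟨↑Sf, ?_, ?_⟩
    · intro M hM hNTm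
      by_cases hMu : M = univ
      · subst hMu
        constructor
        · obtain ⟨s, hs⟩ := Finset.nonempty_iff_ne_empty.mpr hSne
          exact ⟨s, mem_univ s, hs⟩
        · obtain ⟨t, ht⟩ : ∃ t, t ∉ Sf := by
            by_contra hall
            push_neg at hall
            exact hSnu (Finset.eq_univ_iff_forall.mpr hall)
          exact ⟨t, mem_univ t, ht⟩
      · obtain ⟨x, hx, y, hy, hxy⟩ := hNTm
        exact absurd (hsmall M hM hMu x hx y hy) hxy
    · intro M hM hMne hMu heq
      obtain ⟨v, hv⟩ : ∃ v, M = {v} := by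
        obtain ⟨m, hm⟩ := hMne
        refine ⟨m, ?_⟩
        ext z
        simp only [mem_singleton_iff]
        exact ⟨fun hz => hsmall M hM hMu z hz m hm, fun hz => hz ▸ hm⟩
      subst hv
      have hNv : {u | u ∉ ({v} : Set V) ∧ ∀ m ∈ ({v} : Set V), G.Adj u m} =
          G.neighborSet v := by
        ext u
        simp only [mem_singleton_iff, SimpleGraph.mem_neighborSet, mem_setOf_eq]
        constructor
        · rintro ⟨hne', hadj⟩
          exact (hadj v rfl).symm
        · intro hadj
          exact ⟨hadj.ne', fun m hm => hm ▸ hadj.symm⟩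
      rw [hNv] at heq
      by_cases hvS : v ∈ Sf
      · apply hSf
        have hSfeq : Sf = insert v (G.neighborFinset v) := by
          apply Finset.coe_injective
          rw [Finset.coe_insert, SimpleGraph.neighborFinset_def, Set.coe_toFinset, ← heq]
          ext u
          simp only [mem_insert_iff, mem_diff, mem_singleton_iff, Finset.mem_coe]
          constructor
          · intro hu
            by_cases h : u = v
            · exact Or.inl h
            · exact Or.inr ⟨hu, h⟩
          · rintro (rfl | ⟨hu, _⟩)
            · exact hvS
            · exact hu
        rw [hSfeq, hBdef]
        refine Finset.mem_insert_of_mem (Finset.mem_insert_of_mem ?_)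
        refine Finset.mem_biUnion.mpr ⟨v, Finset.mem_univ v, ?_⟩
        simp
      · apply hSf
        have hSfeq : Sf = G.neighborFinset v := by
          apply Finset.coe_injective
          rw [SimpleGraph.neighborFinset_def, Set.coe_toFinset, ← heq]
          ext u
          simp only [mem_diff, mem_singleton_iff, Finset.mem_coe]
          constructor
          · intro hu
            exact ⟨hu, fun he => hvS (he ▸ hu)⟩
          · rintro ⟨hu, _⟩
            exact hu
        rw [hSfeq, hBdef]
        refine Finset.mem_insert_of_mem (Finset.mem_insert_of_mem ?_)
        refine Finset.mem_biUnion.mpr ⟨v, Finset.mem_univ v, ?_⟩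
        simp


lemma prime_compl {K : Type*} [Fintype K] {H : SimpleGraph K} (h : H.IsPrimeGraph) :
    Hᶜ.IsPrimeGraph :=
  ⟨h.1, fun M hM => h.2 M (isModule_compl_iff.mp hM)⟩

lemma compl_isExtension {W : Type*} {H : SimpleGraph (V ⊕ W)} (h : G.IsExtension H) :
    Gᶜ.IsExtension Hᶜ := by
  intro u v
  rw [SimpleGraph.compl_adj, SimpleGraph.compl_adj, h u v]
  constructor
  · rintro ⟨hne, hadj⟩
    exact ⟨fun he => hne (he ▸ rfl), hadj⟩
  · rintro ⟨hne, hadj⟩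
    exact ⟨fun he => hne (Sum.inl.inj he), hadj⟩

lemma one_ext [Fintype V] (h3 : 3 ≤ Fintype.card V) (hNT : NoTrip G)
    (hiso : {v : V | ∀ w, ¬ G.Adj v w}.Subsingleton)
    (huni : {v : V | ∀ w, ¬ Gᶜ.Adj v w}.Subsingleton) :
    ∃ H : SimpleGraph (V ⊕ Fin 1), G.IsExtension H ∧ H.IsPrimeGraph := by
  have hne : Nonempty V := Fintype.card_pos_iff.mp (by omega)
  by_cases hpc : G.Preconnected
  · by_cases hpcc : Gᶜ.Preconnected
    · obtain ⟨S, h1, h2⟩ := one_ext_conn h3 hNT hpc hpcc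
      exact ⟨ext1 G S, ext1_isExtension G S, ext1_prime h3 h1 h2⟩
    · obtain ⟨S, h1, h2⟩ := one_ext_disc (G := Gᶜ) hpcc hNT.compl huni hne
      refine ⟨(ext1 Gᶜ S)ᶜ, ?_, prime_compl (ext1_prime h3 h1 h2)⟩
      have he := compl_isExtension (ext1_isExtension Gᶜ S)
      rwa [compl_compl] at he
  · obtain ⟨S, h1, h2⟩ := one_ext_disc hpc hNT hiso hne
    exact ⟨ext1 G S, ext1_isExtension G S, ext1_prime h3 h1 h2⟩

lemma prime_comap {A B : Type*} [Fintype A] [Fintype B] (e : A ≃ B) {H : SimpleGraph B}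
    (h : H.IsPrimeGraph) : (H.comap e).IsPrimeGraph := by
  constructor
  · rw [Fintype.card_congr e]; exact h.1
  · intro M hM
    have hMe : H.IsModule (e '' M) := by
      intro v hv
      have hva : (e.symm v : A) ∉ M := by
        intro hc
        exact hv ⟨e.symm v, hc, e.apply_symm_apply v⟩
      have hrw : e (e.symm v) = v := e.apply_symm_apply v
      rcases hM (e.symm v) hva with hc | hc
      · refine Or.inl ?_
        rintro m ⟨m', hm', rfl⟩
        have := hc m' hm'
        rwa [SimpleGraph.comap_adj, hrw] at this
      · refine Or.inr ?_
        rintro m ⟨m', hm', rfl⟩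
        have := hc m' hm'
        rwa [SimpleGraph.comap_adj, hrw] at this
    rcases h.2 (e '' M) hMe with h0 | ⟨v, hv⟩ | hu
    · left
      rw [← Set.image_eq_empty (f := e)]
      exact h0
    · right; left
      refine ⟨e.symm v, ?_⟩
      ext x
      simp only [mem_singleton_iff]
      constructor
      · intro hx
        have : e x ∈ e '' M := ⟨x, hx, rfl⟩
        rw [hv, mem_singleton_iff] at this
        exact (by rw [← this, e.symm_apply_apply])
      · rintro rfl
        have : v ∈ e '' M := hv ▸ mem_singleton_iff.mpr rfl
        obtain ⟨m, hm, hme⟩ := this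
        rwa [show m = e.symm v from by rw [← hme, e.symm_apply_apply]] at hm
    · right; right
      rw [eq_univ_iff_forall]
      intro x
      have : e x ∈ e '' M := hu ▸ mem_univ (e x)
      obtain ⟨m, hm, hme⟩ := this
      rwa [e.injective hme] at hm

lemma not_prime_zero_ext [Fintype V] {M0 : Set V} (hM : G.IsModule M0) {x y : V}
    (hxy : x ≠ y) (hx : x ∈ M0) (hy : y ∈ M0) (hcs : M0 = {x, y})
    (H : SimpleGraph (V ⊕ Fin 0)) (hext : G.IsExtension H) : ¬ H.IsPrimeGraph := by
  intro hp
  have hNmod : H.IsModule (Sum.inl '' M0) := by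
    rintro (u | i) hv
    · have huM : u ∉ M0 := fun h => hv ⟨u, h, rfl⟩
      rcases hM u huM with h | h
      · refine Or.inl ?_
        rintro m ⟨m', hm', rfl⟩
        exact (hext u m').mpr (h m' hm')
      · refine Or.inr ?_
        rintro m ⟨m', hm', rfl⟩
        exact fun hc => h m' hm' ((hext u m').mp hc)
    · exact i.elim0
  rcases hp.2 _ hNmod with h0 | ⟨v, hv⟩ | hu
  · exact (eq_empty_iff_forall_notMem.mp h0 (Sum.inl x)) ⟨x, hx, rfl⟩
  · have h1 : (Sum.inl x : V ⊕ Fin 0) = v := by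
      have : (Sum.inl x : V ⊕ Fin 0) ∈ Sum.inl '' M0 := ⟨x, hx, rfl⟩
      rwa [hv, mem_singleton_iff] at this
    have h2 : (Sum.inl y : V ⊕ Fin 0) = v := by
      have : (Sum.inl y : V ⊕ Fin 0) ∈ Sum.inl '' M0 := ⟨y, hy, rfl⟩
      rwa [hv, mem_singleton_iff] at this
    exact hxy (Sum.inl.inj (h1.trans h2.symm))
  · have hcard := hp.1
    have : Fintype.card (V ⊕ Fin 0) ≤ 2 := by
      have he : (univ : Set (V ⊕ Fin 0)) = {Sum.inl x, Sum.inl y} := by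
        rw [← hu, hcs]
        ext z
        cases z with
        | inl u => simp
        | inr i => exact i.elim0
      have h2 : ({Sum.inl x, Sum.inl y} : Set (V ⊕ Fin 0)).ncard ≤ 2 := by
        refine le_trans (Set.ncard_insert_le _ _) ?_
        simp
      rw [← Nat.card_eq_fintype_card, ← Set.ncard_univ, he]
      exact h2
    omega

lemma not_prime_one_ext [Fintype V] (hiso2 : {v : V | ∀ w, ¬ G.Adj v w}.ncard = 2)
    (H : SimpleGraph (V ⊕ Fin 1)) (hext : G.IsExtension H) : ¬ H.IsPrimeGraph := by
  intro hp
  obtain ⟨a, b, hab, hI⟩ := Set.ncard_eq_two.mp hiso2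
  have haiso : ∀ w, ¬ G.Adj a w := by
    have : a ∈ {v : V | ∀ w, ¬ G.Adj v w} := by rw [hI]; simp
    exact this
  have hbiso : ∀ w, ¬ G.Adj b w := by
    have : b ∈ {v : V | ∀ w, ¬ G.Adj v w} := by rw [hI]; simp
    exact this
  have hcard4 := hp.1
  -- an isolated vertex of H kills primality
  have haux : ∀ c : V, (∀ w, ¬ G.Adj c w) → ¬ H.Adj (Sum.inl c) (Sum.inr 0) → False := by
    intro c hciso hcw
    have hisoH : ∀ m, ¬ H.Adj (Sum.inl c) m := by
      rintro (u | i)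
      · intro hc
        exact hciso u ((hext c u).mp hc)
      · have : i = 0 := Fin.eq_zero i
        subst this
        exact hcw
    have hNmod : H.IsModule (univ \ {Sum.inl c}) := by
      intro v hv
      have hvc : v = Sum.inl c := by
        by_contra hne
        exact hv ⟨mem_univ v, hne⟩
      subst hvc
      exact Or.inr fun m _ => hisoH m
    rcases hp.2 _ hNmod with h0 | ⟨v, hv⟩ | hu
    · have hcc : Fintype.card (V ⊕ Fin 1) ≤ 1 := by
        have he : (univ : Set (V ⊕ Fin 1)) ⊆ {Sum.inl c} := by
          intro z hz
          by_contra hne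
          exact (eq_empty_iff_forall_notMem.mp h0 z) ⟨hz, hne⟩
        have := Set.ncard_le_ncard he (Set.finite_singleton _)
        rwa [Set.ncard_univ, Nat.card_eq_fintype_card, Set.ncard_singleton] at this
      omega
    · have hcc : Fintype.card (V ⊕ Fin 1) ≤ 2 := by
        have he : (univ : Set (V ⊕ Fin 1)) ⊆ {v, Sum.inl c} := by
          intro z hz
          by_cases hne : z = Sum.inl c
          · exact Or.inr hne
          · have : z ∈ univ \ {Sum.inl c} := ⟨hz, hne⟩
            rw [hv] at this
            exact Or.inl this
        have hle := Set.ncard_le_ncard he (Set.toFinite _)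
        have h2 : ({v, Sum.inl c} : Set (V ⊕ Fin 1)).ncard ≤ 2 := by
          refine le_trans (Set.ncard_insert_le _ _) ?_
          simp
        rw [Set.ncard_univ, Nat.card_eq_fintype_card] at hle
        omega
      omega
    · have : Sum.inl c ∈ univ \ {Sum.inl c} := hu ▸ mem_univ _
      exact this.2 rfl
  by_cases haw : H.Adj (Sum.inl a) (Sum.inr 0)
  · by_cases hbw : H.Adj (Sum.inl b) (Sum.inr 0)
    · -- {a, b} is still a module of H
      have hNmod : H.IsModule {Sum.inl a, Sum.inl b} := by
        rintro (u | i) hv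
        · refine Or.inr ?_
          rintro m hm
          rcases hm with rfl | hm
          · exact fun hc => haiso u ((hext u a).mp hc).symm
          · rw [mem_singleton_iff] at hm
            subst hm
            exact fun hc => hbiso u ((hext u b).mp hc).symm
        · have : i = 0 := Fin.eq_zero i
          subst this
          refine Or.inl ?_
          rintro m hm
          rcases hm with rfl | hm
          · exact haw.symm
          · rw [mem_singleton_iff] at hm
            subst hm
            exact hbw.symm
      rcases hp.2 _ hNmod with h0 | ⟨v, hv⟩ | hu
      · exact (eq_empty_iff_forall_notMem.mp h0 (Sum.inl a)) (Or.inl rfl)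
      · have h1 : (Sum.inl a : V ⊕ Fin 1) = v := by
          have : (Sum.inl a : V ⊕ Fin 1) ∈ ({Sum.inl a, Sum.inl b} : Set (V ⊕ Fin 1)) :=
            Or.inl rfl
          rwa [hv, mem_singleton_iff] at this
        have h2 : (Sum.inl b : V ⊕ Fin 1) = v := by
          have : (Sum.inl b : V ⊕ Fin 1) ∈ ({Sum.inl a, Sum.inl b} : Set (V ⊕ Fin 1)) :=
            Or.inr rfl
          rwa [hv, mem_singleton_iff] at this
        exact hab (Sum.inl.inj (h1.trans h2.symm))
      · have : (Sum.inr 0 : V ⊕ Fin 1) ∈ ({Sum.inl a, Sum.inl b} : Set (V ⊕ Fin 1)) :=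
          hu ▸ mem_univ _
        rcases this with h | h
        · exact absurd h (by simp)
        · rw [mem_singleton_iff] at h
          exact absurd h (by simp)
    · exact haux b hbiso hbw
  · exact haux a haiso haw

lemma two_ext [Fintype V] (hNT : NoTrip G)
    (hiso2 : {v : V | ∀ w, ¬ G.Adj v w}.ncard = 2) :
    ∃ H : SimpleGraph (V ⊕ Fin 2), G.IsExtension H ∧ H.IsPrimeGraph := by
  classical
  obtain ⟨a, b, hab, hI⟩ := Set.ncard_eq_two.mp hiso2
  have haiso : ∀ w, ¬ G.Adj a w := by
    have : a ∈ {v : V | ∀ w, ¬ G.Adj v w} := by rw [hI]; simp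
    exact this
  have hbiso : ∀ w, ¬ G.Adj b w := by
    have : b ∈ {v : V | ∀ w, ¬ G.Adj v w} := by rw [hI]; simp
    exact this
  have hmemI : ∀ v : V, (∀ w, ¬ G.Adj v w) → v = a ∨ v = b := by
    intro v hv
    have hm : v ∈ {v : V | ∀ w, ¬ G.Adj v w} := hv
    rw [hI] at hm
    simpa using hm
  have hcard2 : 2 ≤ Fintype.card V := Fintype.one_lt_card_iff.mpr ⟨a, b, hab⟩
  set G1 : SimpleGraph (V ⊕ Fin 1) := ext1 G {a} with hG1def
  have h3' : 3 ≤ Fintype.card (V ⊕ Fin 1) := by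
    rw [Fintype.card_sum, Fintype.card_fin]; omega
  have hNT1 : NoTrip G1 := by
    intro M hMod hcs x hx y hy z hz hxy hxz hyz
    by_cases hw : (Sum.inr 0 : V ⊕ Fin 1) ∈ M
    · obtain ⟨p, hp, q, hq, hpq, hpw, hqw⟩ : ∃ p ∈ M, ∃ q ∈ M, p ≠ q ∧
          p ≠ (Sum.inr 0 : V ⊕ Fin 1) ∧ q ≠ (Sum.inr 0 : V ⊕ Fin 1) := by
        by_cases hxw : x = (Sum.inr 0 : V ⊕ Fin 1)
        · exact ⟨y, hy, z, hz, hyz, fun h => hxy (hxw.trans h.symm),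
            fun h => hxz (hxw.trans h.symm)⟩
        · by_cases hyw : y = (Sum.inr 0 : V ⊕ Fin 1)
          · exact ⟨x, hx, z, hz, hxz, hxw, fun h => hyz (hyw.trans h.symm)⟩
          · exact ⟨x, hx, y, hy, hxy, hxw, hyw⟩
      obtain ⟨p', rfl⟩ : ∃ p', p = Sum.inl p' := by
        cases p with
        | inl u => exact ⟨u, rfl⟩
        | inr i =>
            exact absurd (show Sum.inr i = (Sum.inr 0 : V ⊕ Fin 1) by rw [Fin.eq_zero i]) hpw
      obtain ⟨q', rfl⟩ : ∃ q', q = Sum.inl q' := by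
        cases q with
        | inl u => exact ⟨u, rfl⟩
        | inr i =>
            exact absurd (show Sum.inr i = (Sum.inr 0 : V ⊕ Fin 1) by rw [Fin.eq_zero i]) hqw
      rcases hcs with hc | hs
      · have h1 : p' ∈ ({a} : Set V) := hc _ hp _ hw hpw
        have h2 : q' ∈ ({a} : Set V) := hc _ hq _ hw hqw
        exact hpq (by rw [h1, h2])
      · by_cases hA : (Sum.inl a : V ⊕ Fin 1) ∈ M
        · exact hs _ hA _ hw rfl
        · rcases hMod _ hA with hcomp | hanti
          · exact haiso p' (hcomp _ hp)
          · exact hanti _ hw rfl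
    · have hMsub : ∀ m ∈ M, ∃ m', m = Sum.inl m' := by
        intro m hm
        cases m with
        | inl u => exact ⟨u, rfl⟩
        | inr i =>
            rw [Fin.eq_zero i] at hm
            exact absurd hm hw
      have hM0 : G.IsModule (Sum.inl ⁻¹' M) := by
        intro v hv
        rcases hMod (Sum.inl v) hv with h | h
        · exact Or.inl fun m hm => h (Sum.inl m) hm
        · exact Or.inr fun m hm => h (Sum.inl m) hm
      obtain ⟨x', rfl⟩ := hMsub x hx
      obtain ⟨y', rfl⟩ := hMsub y hy
      obtain ⟨z', rfl⟩ := hMsub z hz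
      refine hNT _ hM0 ?_ x' hx y' hy z' hz (fun h => hxy (h ▸ rfl))
        (fun h => hxz (h ▸ rfl)) (fun h => hyz (h ▸ rfl))
      rcases hcs with hc | hs
      · exact Or.inl fun u hu v hv huv => hc _ hu _ hv (fun h => huv (Sum.inl.inj h))
      · exact Or.inr fun u hu v hv => hs _ hu _ hv
  have hiso1 : {v : V ⊕ Fin 1 | ∀ w, ¬ G1.Adj v w}.Subsingleton := by
    have hkey : ∀ v ∈ {v : V ⊕ Fin 1 | ∀ w, ¬ G1.Adj v w}, v = Sum.inl b := by
      rintro (u | i) hv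
      · have h1 : u ≠ a := fun h => hv (Sum.inr 0) (by exact h)
        have h2 : ∀ w, ¬ G.Adj u w := fun w hw => hv (Sum.inl w) hw
        rcases hmemI u h2 with h | h
        · exact absurd h h1
        · exact h ▸ rfl
      · exact absurd (show G1.Adj (Sum.inr i) (Sum.inl a) from rfl) (hv (Sum.inl a))
    exact fun p hp q hq => (hkey p hp).trans (hkey q hq).symm
  have huni1 : {v : V ⊕ Fin 1 | ∀ w, ¬ G1ᶜ.Adj v w}.Subsingleton := by
    have hkey : ∀ v, v ∈ {v : V ⊕ Fin 1 | ∀ w, ¬ G1ᶜ.Adj v w} → False := by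
      intro v hv
      have hadj : ∀ w, w ≠ v → G1.Adj v w := by
        intro w hw
        have h := hv w
        rw [SimpleGraph.compl_adj] at h
        push_neg at h
        exact h (fun he => hw (he.symm))
      cases v with
      | inl u =>
          have h1 : G1.Adj (Sum.inl u) (Sum.inr 0) := hadj (Sum.inr 0) (by simp)
          have hua : u = a := h1
          have h2 : G1.Adj (Sum.inl u) (Sum.inl b) := hadj (Sum.inl b)
            (by simp [hua, Ne.symm hab])
          exact haiso b (hua ▸ h2)
      | inr i =>
          have h1 : G1.Adj (Sum.inr i) (Sum.inl b) := hadj (Sum.inl b) (by simp)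
          exact hab ((show b ∈ ({a} : Set V) from h1).symm)
    exact fun p hp => absurd hp (fun h => hkey p h)
  obtain ⟨H', hext', hprime'⟩ := one_ext (G := G1) h3' hNT1 hiso1 huni1
  set e : (V ⊕ Fin 2) ≃ ((V ⊕ Fin 1) ⊕ Fin 1) :=
    (Equiv.sumCongr (Equiv.refl V) finSumFinEquiv.symm).trans
      (Equiv.sumAssoc V (Fin 1) (Fin 1)).symm with hedef
  have hee : ∀ u : V, e (Sum.inl u) = Sum.inl (Sum.inl u) := by
    intro u
    simp [hedef, Equiv.sumCongr_apply, Equiv.sumAssoc]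
  refine ⟨H'.comap e, ?_, prime_comap e hprime'⟩
  intro u v
  show H'.Adj (e (Sum.inl u)) (e (Sum.inl v)) ↔ G.Adj u v
  rw [hee u, hee v, hext' (Sum.inl u) (Sum.inl v)]
  exact Iff.rfl

end PB

/-- when `max(α_M(G), ω_M(G)) = 2`, `p(G) = 2` iff `G` or its complement
has exactly 2 isolated vertices; otherwise `p(G) = 1`. -/
theorem primeBound_of_max_eq_two {V : Type*} [Fintype V] (G : SimpleGraph V)
    (h : max G.modularStabilityNumber G.modularCliqueNumber = 2) :
    (G.primeBound = 2 ↔ G.isolatedCount = 2 ∨ Gᶜ.isolatedCount = 2) ∧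
    (¬ (G.isolatedCount = 2 ∨ Gᶜ.isolatedCount = 2) → G.primeBound = 1) := by
  classical
  have hub : ∀ (G' : SimpleGraph V),
      BddAbove {n : ℕ | ∃ M : Set V, G'.IsModule M ∧ G'.IsClique M ∧ M.ncard = n} := by
    intro G'
    refine ⟨Fintype.card V, ?_⟩
    rintro n ⟨M, -, -, rfl⟩
    calc M.ncard ≤ (Set.univ : Set V).ncard :=
          Set.ncard_le_ncard (Set.subset_univ M) Set.finite_univ
    _ = Fintype.card V := by rw [Set.ncard_univ, Nat.card_eq_fintype_card]
  have h0mem : ∀ (G' : SimpleGraph V),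
      0 ∈ {n : ℕ | ∃ M : Set V, G'.IsModule M ∧ G'.IsClique M ∧ M.ncard = n} := by
    intro G'
    exact ⟨∅, PB.isModule_empty G', by simp, by simp⟩
  have hα : G.modularStabilityNumber ≤ 2 := h ▸ le_max_left _ _
  have hω : G.modularCliqueNumber ≤ 2 := h ▸ le_max_right _ _
  have hCB : ∀ (G' : SimpleGraph V), G'.modularCliqueNumber ≤ 2 → ∀ M : Set V,
      G'.IsModule M → (∀ x ∈ M, ∀ y ∈ M, x ≠ y → G'.Adj x y) → M.ncard ≤ 2 := by
    intro G' hle M hM hclq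
    have hmem : M.ncard ∈ {n : ℕ | ∃ M : Set V, G'.IsModule M ∧ G'.IsClique M ∧ M.ncard = n} :=
      ⟨M, hM, fun x hx y hy hxy => hclq x hx y hy hxy, rfl⟩
    have := le_csSup (hub G') hmem
    rw [SimpleGraph.modularCliqueNumber] at hle
    omega
  have hαc : Gᶜ.modularCliqueNumber ≤ 2 := hα
  have hNTG : PB.NoTrip G := by
    intro M hM hcs x hx y hy z hz hxy hxz hyz
    have h3 : ({x, y, z} : Set V).ncard = 3 :=
      Set.ncard_eq_three.mpr ⟨x, y, z, hxy, hxz, hyz, rfl⟩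
    have hsub : ({x, y, z} : Set V) ⊆ M := by
      intro w hw
      simp only [Set.mem_insert_iff, Set.mem_singleton_iff] at hw
      rcases hw with rfl | rfl | rfl <;> assumption
    rcases hcs with hc | hs
    · have hmod := PB.clique_submodule hM hc hsub
      have := hCB G hω _ hmod (fun p hp q hq hpq => hc p (hsub hp) q (hsub hq) hpq)
      omega
    · have hmod := PB.stable_submodule hM hs hsub
      have hmodc : Gᶜ.IsModule {x, y, z} := PB.module_compl hmod
      have := hCB Gᶜ hαc _ hmodc
        (fun p hp q hq hpq => ⟨hpq, hs p (hsub hp) q (hsub hq)⟩)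
      omega
  have hNTGc : PB.NoTrip Gᶜ := hNTG.compl
  have h2mod : ∃ x y : V, x ≠ y ∧ G.IsModule {x, y} := by
    have hor : G.modularStabilityNumber = 2 ∨ G.modularCliqueNumber = 2 := by
      rcases max_eq_iff.mp h with ⟨h1, -⟩ | ⟨h1, -⟩
      exacts [Or.inl h1, Or.inr h1]
    have hget : ∀ (G' : SimpleGraph V), G'.modularCliqueNumber = 2 →
        ∃ M : Set V, G'.IsModule M ∧ M.ncard = 2 := by
      intro G' he
      have hmem := Nat.sSup_mem ⟨0, h0mem G'⟩ (hub G')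
      rw [SimpleGraph.modularCliqueNumber] at he
      rw [he] at hmem
      obtain ⟨M, hM, -, hMn⟩ := hmem
      exact ⟨M, hM, hMn⟩
    rcases hor with h1 | h1
    · obtain ⟨M, hM, hM2⟩ := hget Gᶜ h1
      obtain ⟨x, y, hxy, rfl⟩ := Set.ncard_eq_two.mp hM2
      exact ⟨x, y, hxy, PB.isModule_compl_iff.mp hM⟩
    · obtain ⟨M, hM, hM2⟩ := hget G h1
      obtain ⟨x, y, hxy, rfl⟩ := Set.ncard_eq_two.mp hM2
      exact ⟨x, y, hxy, hM⟩
  obtain ⟨x2, y2, hxy2, hmod2⟩ := h2mod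
  have hcard2 : 2 ≤ Fintype.card V := Fintype.one_lt_card_iff.mpr ⟨x2, y2, hxy2⟩
  have hISO2 : ∀ (G' : SimpleGraph V), PB.NoTrip G' →
      {v : V | ∀ w, ¬ G'.Adj v w}.ncard ≤ 2 := by
    intro G' hNT'
    by_contra hgt
    push_neg at hgt
    obtain ⟨t, hts, ht3⟩ := Set.exists_subset_card_eq (n := 3)
      (s := {v : V | ∀ w, ¬ G'.Adj v w}) (by omega)
    obtain ⟨x, y, z, hxy, hxz, hyz, rfl⟩ := Set.ncard_eq_three.mp ht3
    refine hNT' {x, y, z} (PB.isModule_of_isolated (fun p hp w => hts hp w))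
      (Or.inr (fun p hp q _ => hts hp q)) x (by simp) y (by simp) z (by simp) hxy hxz hyz
  have h0not : (0 : ℕ) ∉ {p : ℕ | ∃ H : SimpleGraph (V ⊕ Fin p),
      G.IsExtension H ∧ H.IsPrimeGraph} := by
    rintro ⟨H, hext, hprime⟩
    exact PB.not_prime_zero_ext hmod2 hxy2 (Or.inl rfl) (Or.inr rfl) rfl H hext hprime
  by_cases hbad : G.isolatedCount = 2 ∨ Gᶜ.isolatedCount = 2
  · have h2mem : (2 : ℕ) ∈ {p : ℕ | ∃ H : SimpleGraph (V ⊕ Fin p),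
        G.IsExtension H ∧ H.IsPrimeGraph} := by
      rcases hbad with h2 | h2
      · rw [SimpleGraph.isolatedCount] at h2
        obtain ⟨H2, he2, hp2⟩ := PB.two_ext hNTG h2
        exact ⟨H2, he2, hp2⟩
      · rw [SimpleGraph.isolatedCount] at h2
        obtain ⟨H2, he2, hp2⟩ := PB.two_ext (G := Gᶜ) hNTGc h2
        refine ⟨H2ᶜ, ?_, PB.prime_compl hp2⟩
        have hc := PB.compl_isExtension he2
        rwa [compl_compl] at hc
    have h1not : (1 : ℕ) ∉ {p : ℕ | ∃ H : SimpleGraph (V ⊕ Fin p),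
        G.IsExtension H ∧ H.IsPrimeGraph} := by
      rintro ⟨H, hext, hprime⟩
      rcases hbad with h2 | h2
      · rw [SimpleGraph.isolatedCount] at h2
        exact PB.not_prime_one_ext h2 H hext hprime
      · rw [SimpleGraph.isolatedCount] at h2
        exact PB.not_prime_one_ext (G := Gᶜ) h2 Hᶜ (PB.compl_isExtension hext)
          (PB.prime_compl hprime)
    have hPne : {p : ℕ | ∃ H : SimpleGraph (V ⊕ Fin p),
        G.IsExtension H ∧ H.IsPrimeGraph}.Nonempty := ⟨2, h2mem⟩
    have hmem := Nat.sInf_mem hPne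
    have hle := Nat.sInf_le h2mem
    have hz : sInf {p : ℕ | ∃ H : SimpleGraph (V ⊕ Fin p),
        G.IsExtension H ∧ H.IsPrimeGraph} ≠ 0 := fun hzz => h0not (hzz ▸ hmem)
    have ho : sInf {p : ℕ | ∃ H : SimpleGraph (V ⊕ Fin p),
        G.IsExtension H ∧ H.IsPrimeGraph} ≠ 1 := fun hoo => h1not (hoo ▸ hmem)
    have hpb : G.primeBound = 2 := by
      rw [SimpleGraph.primeBound]
      omega
    exact ⟨⟨fun _ => hbad, fun _ => hpb⟩, fun hng => absurd hbad hng⟩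
  · push_neg at hbad
    obtain ⟨hbG, hbGc⟩ := hbad
    have h3V : 3 ≤ Fintype.card V := by
      by_contra h3
      have hc2 : (Set.univ : Set V).ncard = 2 := by
        rw [Set.ncard_univ, Nat.card_eq_fintype_card]; omega
      obtain ⟨x, y, hxy, hcov⟩ := Set.ncard_eq_two.mp hc2
      have hcov' : ∀ z : V, z = x ∨ z = y := by
        intro z
        have : z ∈ (Set.univ : Set V) := Set.mem_univ z
        rw [hcov] at this
        simpa using this
      by_cases hadj : G.Adj x y
      · apply hbGc
        rw [SimpleGraph.isolatedCount]
        have he : {v : V | ∀ w, ¬ Gᶜ.Adj v w} = Set.univ := by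
          refine Set.eq_univ_iff_forall.mpr (fun v w hvw => ?_)
          rw [SimpleGraph.compl_adj] at hvw
          obtain ⟨hne, hnadj⟩ := hvw
          rcases hcov' v with rfl | rfl <;> rcases hcov' w with rfl | rfl
          · exact hne rfl
          · exact hnadj hadj
          · exact hnadj hadj.symm
          · exact hne rfl
        rw [he, Set.ncard_univ, Nat.card_eq_fintype_card]; omega
      · apply hbG
        rw [SimpleGraph.isolatedCount]
        have he : {v : V | ∀ w, ¬ G.Adj v w} = Set.univ := by
          refine Set.eq_univ_iff_forall.mpr (fun v w hvw => ?_)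
          rcases hcov' v with rfl | rfl <;> rcases hcov' w with rfl | rfl
          · exact G.loopless.irrefl _ hvw
          · exact hadj hvw
          · exact hadj hvw.symm
          · exact G.loopless.irrefl _ hvw
        rw [he, Set.ncard_univ, Nat.card_eq_fintype_card]; omega
    have hiso1 : {v : V | ∀ w, ¬ G.Adj v w}.Subsingleton := by
      have h1 : {v : V | ∀ w, ¬ G.Adj v w}.ncard ≤ 1 := by
        have hb := hISO2 G hNTG
        rw [SimpleGraph.isolatedCount] at hbG
        omega
      exact fun p hp q hq => (Set.ncard_le_one (Set.toFinite _)).mp h1 p hp q hq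
    have huni1 : {v : V | ∀ w, ¬ Gᶜ.Adj v w}.Subsingleton := by
      have h1 : {v : V | ∀ w, ¬ Gᶜ.Adj v w}.ncard ≤ 1 := by
        have hb := hISO2 Gᶜ hNTGc
        rw [SimpleGraph.isolatedCount] at hbGc
        omega
      exact fun p hp q hq => (Set.ncard_le_one (Set.toFinite _)).mp h1 p hp q hq
    obtain ⟨H1, hext1, hp1⟩ := PB.one_ext h3V hNTG hiso1 huni1
    have h1mem : (1 : ℕ) ∈ {p : ℕ | ∃ H : SimpleGraph (V ⊕ Fin p),
        G.IsExtension H ∧ H.IsPrimeGraph} := ⟨H1, hext1, hp1⟩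
    have hPne : {p : ℕ | ∃ H : SimpleGraph (V ⊕ Fin p),
        G.IsExtension H ∧ H.IsPrimeGraph}.Nonempty := ⟨1, h1mem⟩
    have hmem := Nat.sInf_mem hPne
    have hle := Nat.sInf_le h1mem
    have hz : sInf {p : ℕ | ∃ H : SimpleGraph (V ⊕ Fin p),
        G.IsExtension H ∧ H.IsPrimeGraph} ≠ 0 := fun hzz => h0not (hzz ▸ hmem)
    have hpb : G.primeBound = 1 := by
      rw [SimpleGraph.primeBound]
      omega
    refine ⟨⟨fun hp2 => absurd (hpb.symm.trans hp2) (by norm_num), ?_⟩, fun _ => hpb⟩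
    rintro (h2 | h2)
    · exact absurd h2 hbG
    · exact absurd h2 hbGc
end

section
/- For every non-prime finite graph G with |V(G)| ≥ 4 and α_M(G) = ω_M(G) = 1, we have p(G) = 1; that is, G admits a prime extension obtained by adding a single vertex. -/
open Set

namespace PB17

variable {V : Type*}

/-- adjacency to a module is uniform -/
lemma uniform {G : SimpleGraph V} {M : Set V} (h : G.IsModule M) {v a b : V}
    (hv : v ∉ M) (ha : a ∈ M) (hb : b ∈ M) : G.Adj v a ↔ G.Adj v b := by
  rcases h v hv with h' | h'
  · simp [h' a ha, h' b hb]
  · simp [h' a ha, h' b hb]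

lemma isModule_compl {G : SimpleGraph V} {M : Set V} (h : G.IsModule M) : Gᶜ.IsModule M := by
  intro v hv
  rcases h v hv with h' | h'
  · right; intro m hm hc
    rw [SimpleGraph.compl_adj] at hc
    exact hc.2 (h' m hm)
  · left; intro m hm
    rw [SimpleGraph.compl_adj]
    exact ⟨fun he => hv (he ▸ hm), h' m hm⟩

lemma isModule_of_compl {G : SimpleGraph V} {M : Set V} (h : Gᶜ.IsModule M) : G.IsModule M := by
  have := isModule_compl h
  rwa [compl_compl] at this

/-- `u` has a neighbour in `S`. -/
def AdjTo (G : SimpleGraph V) (u : V) (S : Set V) : Prop := ∃ s ∈ S, G.Adj u s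

lemma adjTo_iff {G : SimpleGraph V} {S : Set V} (hS : G.IsModule S) {u s₀ : V}
    (hu : u ∉ S) (hs₀ : s₀ ∈ S) : AdjTo G u S ↔ G.Adj u s₀ := by
  constructor
  · rintro ⟨s, hs, hadj⟩
    exact (uniform hS hu hs hs₀).mp hadj
  · intro h; exact ⟨s₀, hs₀, h⟩

lemma adjTo_compl {G : SimpleGraph V} {S : Set V} (hS : G.IsModule S) {u : V}
    (hu : u ∉ S) (hne : S.Nonempty) : AdjTo Gᶜ u S ↔ ¬ AdjTo G u S := by
  obtain ⟨s₀, hs₀⟩ := hne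
  rw [adjTo_iff (isModule_compl hS) hu hs₀, adjTo_iff hS hu hs₀, SimpleGraph.compl_adj]
  have : u ≠ s₀ := fun he => hu (he ▸ hs₀)
  tauto

lemma isModule_union {G : SimpleGraph V} {M M' : Set V} (hM : G.IsModule M)
    (hM' : G.IsModule M') (hI : (M ∩ M').Nonempty) : G.IsModule (M ∪ M') := by
  obtain ⟨x, hxM, hxM'⟩ := hI
  intro v hv
  rw [mem_union] at hv; push_neg at hv
  rcases hM v hv.1 with h1 | h1 <;> rcases hM' v hv.2 with h2 | h2
  · left; rintro m (hm | hm); exacts [h1 m hm, h2 m hm]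
  · exact absurd (h1 x hxM) (h2 x hxM')
  · exact absurd (h2 x hxM') (h1 x hxM)
  · right; rintro m (hm | hm); exacts [h1 m hm, h2 m hm]

/-! ### components within a module -/

def Step (G : SimpleGraph V) (P : Set V) (a b : V) : Prop := a ∈ P ∧ b ∈ P ∧ G.Adj a b

def comp (G : SimpleGraph V) (P : Set V) (x : V) : Set V :=
  {y | Relation.ReflTransGen (Step G P) x y}

lemma step_symm (G : SimpleGraph V) (P : Set V) : Symmetric (Step G P) :=
  fun _ _ h => ⟨h.2.1, h.1, h.2.2.symm⟩

lemma mem_comp_self (G : SimpleGraph V) (P : Set V) (x : V) : x ∈ comp G P x :=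
  Relation.ReflTransGen.refl

lemma comp_symm {G : SimpleGraph V} {P : Set V} {x y : V} (h : y ∈ comp G P x) :
    x ∈ comp G P y :=
  by
    haveI : Std.Symm (Step G P) := ⟨fun a b h => step_symm G P h⟩
    exact Std.Symm.symm _ _ h

lemma comp_trans {G : SimpleGraph V} {P : Set V} {x y z : V} (h : y ∈ comp G P x)
    (h' : z ∈ comp G P y) : z ∈ comp G P x :=
  Relation.ReflTransGen.trans h h'

lemma comp_eq {G : SimpleGraph V} {P : Set V} {x y : V} (h : y ∈ comp G P x) :
    comp G P y = comp G P x := by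
  ext z
  exact ⟨fun hz => comp_trans h hz, fun hz => comp_trans (comp_symm h) hz⟩

lemma comp_subset {G : SimpleGraph V} {P : Set V} {x : V} (hx : x ∈ P) :
    comp G P x ⊆ P := by
  intro y hy
  rcases (Relation.ReflTransGen.cases_tail hy) with h | ⟨c, _, hstep⟩
  · exact h ▸ hx
  · exact hstep.2.1

lemma adj_mem_comp {G : SimpleGraph V} {P : Set V} {x y : V} (hx : x ∈ P) (hy : y ∈ P)
    (h : G.Adj x y) : y ∈ comp G P x :=
  Relation.ReflTransGen.single ⟨hx, hy, h⟩

lemma not_adj_of_not_mem_comp {G : SimpleGraph V} {P : Set V} {x u m : V} (hx : x ∈ P)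
    (hm : m ∈ comp G P x) (hu : u ∈ P) (hu' : u ∉ comp G P x) : ¬ G.Adj u m := by
  intro hadj
  exact hu' (comp_trans hm (adj_mem_comp (comp_subset hx hm) hu hadj.symm))

lemma boundary {G : SimpleGraph V} {P : Set V} {x : V} (hx : x ∈ P) {A : Set V}
    (hA : A ⊆ comp G P x) {a y : V} (ha : a ∈ A) (hy : y ∈ comp G P x) (hyA : y ∉ A) :
    ∃ u ∈ comp G P x \ A, ∃ m ∈ A, G.Adj u m := by
  have hax : comp G P a = comp G P x := comp_eq (hA ha)
  have hay : Relation.ReflTransGen (Step G P) a y := by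
    have : y ∈ comp G P a := hax ▸ hy
    exact this
  have key : ∀ z, Relation.ReflTransGen (Step G P) a z →
      z ∈ A ∨ ∃ u ∈ comp G P x \ A, ∃ m ∈ A, G.Adj u m := by
    intro z hz
    induction hz with
    | refl => exact Or.inl ha
    | @tail b c hab hbc ih =>
      rcases ih with hb | done
      · by_cases hc : c ∈ A
        · exact Or.inl hc
        · refine Or.inr ⟨c, ⟨?_, hc⟩, b, hb, hbc.2.2.symm⟩
          have : c ∈ comp G P a := Relation.ReflTransGen.tail hab hbc
          exact hax ▸ this
      · exact Or.inr done
  rcases key y hay with h | h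
  · exact absurd h hyA
  · exact h

lemma comp_isModule {G : SimpleGraph V} {P : Set V} (hmod : G.IsModule P) {x : V}
    (hx : x ∈ P) : G.IsModule (comp G P x) := by
  intro v hv
  by_cases hvP : v ∈ P
  · right; intro m hm; exact not_adj_of_not_mem_comp hx hm hvP hv
  · rcases hmod v hvP with h | h
    · left; intro m hm; exact h m (comp_subset hx hm)
    · right; intro m hm; exact h m (comp_subset hx hm)

lemma module_classify {G : SimpleGraph V} {P : Set V} {M : Set V} (hMP : M ⊆ P)
    (hMmod : G.IsModule M) :
    (∀ x ∈ M, comp G P x ⊆ M) ∨ (∃ x ∈ M, M ⊆ comp G P x) := by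
  by_cases h : ∀ x ∈ M, comp G P x ⊆ M
  · exact Or.inl h
  push_neg at h
  obtain ⟨x, hxM, hns⟩ := h
  rw [Set.not_subset] at hns
  obtain ⟨y, hy, hyM⟩ := hns
  refine Or.inr ⟨x, hxM, ?_⟩
  intro m' hm'
  by_contra hm'c
  obtain ⟨u, hu, m, hmA, hadj⟩ := boundary (hMP hxM) (inter_subset_right (s := M))
      (⟨hxM, mem_comp_self G P x⟩ : x ∈ M ∩ comp G P x) hy (fun hyA => hyM hyA.1)
  have huM : u ∉ M := fun hmem => hu.2 ⟨hmem, hu.1⟩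
  have hadj' : G.Adj u m' := (uniform hMmod huM hmA.1 hm').mp hadj
  exact hm'c (comp_trans hu.1 (adj_mem_comp (comp_subset (hMP hxM) hu.1) (hMP hm') hadj'))

lemma pair_module {G : SimpleGraph V} {P : Set V} (hmod : G.IsModule P) {x y : V}
    (hx : x ∈ P) (hy : y ∈ P) (hcx : comp G P x = {x}) (hcy : comp G P y = {y}) :
    G.IsModule {x, y} := by
  intro v hv
  simp only [mem_insert_iff, mem_singleton_iff] at hv
  push_neg at hv
  by_cases hvP : v ∈ P
  · right
    rintro m (rfl | rfl)
    · intro hadj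
      have : v ∈ comp G P m := adj_mem_comp hx hvP hadj.symm
      rw [hcx] at this; exact hv.1 this
    · intro hadj
      have : v ∈ comp G P m := adj_mem_comp hy hvP hadj.symm
      rw [hcy] at this; exact hv.2 this
  · rcases hmod v hvP with h | h
    · left; rintro m (rfl | rfl); exacts [h _ hx, h _ hy]
    · right; rintro m (rfl | rfl); exacts [h _ hx, h _ hy]

end PB17
namespace PB17

variable {V : Type*}

open Set

/-- Gallai: two crossing proper modules covering `P` contradict connectivity of `P`
in `G` and `Gᶜ`. -/
lemma crossing {G : SimpleGraph V} {P M M' : Set V} (hMP : M ⊆ P) (hM'P : M' ⊆ P)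
    (hM : G.IsModule M) (hM' : G.IsModule M') (hU : M ∪ M' = P)
    (hA : (M \ M').Nonempty) (hB : (M' \ M).Nonempty) (hC : (M ∩ M').Nonempty)
    (hconn : ∀ x ∈ P, ∀ y ∈ P, y ∈ comp G P x)
    (hcoconn : ∀ x ∈ P, ∀ y ∈ P, y ∈ comp Gᶜ P x) : False := by
  obtain ⟨a0, ha0⟩ := hA
  obtain ⟨b0, hb0⟩ := hB
  obtain ⟨c0, hc0⟩ := hC
  set ε := G.Adj b0 c0 with hε
  -- all cross adjacencies equal ε
  have hb0M : b0 ∉ M := hb0.2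
  have ha0M' : a0 ∉ M' := ha0.2
  have hab0 : ∀ a ∈ M \ M', (G.Adj a b0 ↔ ε) := by
    intro a ha
    rw [SimpleGraph.adj_comm]
    exact uniform hM hb0M ha.1 hc0.1
  have hac : ∀ a ∈ M \ M', ∀ c ∈ M ∩ M', (G.Adj a c ↔ ε) := by
    intro a ha c hc
    rw [uniform hM' ha.2 hc.2 hb0.1]
    exact hab0 a ha
  have hab : ∀ a ∈ M \ M', ∀ b ∈ M' \ M, (G.Adj a b ↔ ε) := by
    intro a ha b hb
    rw [uniform hM' ha.2 hb.1 hb0.1]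
    exact hab0 a ha
  have hbc : ∀ b ∈ M' \ M, ∀ c ∈ M ∩ M', (G.Adj b c ↔ ε) := by
    intro b hb c hc
    rw [uniform hM hb.2 hc.1 ha0.1, SimpleGraph.adj_comm, uniform hM' ha0.2 hb.1 hc0.2]
    exact hac a0 ha0 c0 hc0
  -- every cross pair (u in C, v outside C but in P) has adjacency ↔ ε
  have cross : ∀ u ∈ M ∩ M', ∀ v ∈ P, v ∉ M ∩ M' → (G.Adj v u ↔ ε) := by
    intro u hu v hvP hvC
    have hv' : v ∈ M ∪ M' := hU ▸ hvP
    rcases hv' with hv | hv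
    · exact hac v ⟨hv, fun h => hvC ⟨hv, h⟩⟩ u hu
    · exact hbc v ⟨hv, fun h => hvC ⟨h, hv⟩⟩ u hu
  by_cases he : ε
  · -- complement: all cross pairs non-adjacent in Gᶜ; co-component of c0 stays in C
    have hsub : comp Gᶜ P c0 ⊆ M ∩ M' := by
      intro z hz
      induction hz with
      | refl => exact hc0
      | @tail b c hab' hbc' ih =>
        by_contra hc
        have hbC := ih
        have : G.Adj c b ↔ ε := cross b hbC c hbc'.2.1 hc
        have hGadj : G.Adj c b := this.mpr he
        have := hbc'.2.2
        rw [SimpleGraph.compl_adj] at this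
        exact this.2 hGadj.symm
    have := hsub (hcoconn c0 (hMP hc0.1) a0 (hMP ha0.1))
    exact ha0M' this.2
  · have hsub : comp G P c0 ⊆ M ∩ M' := by
      intro z hz
      induction hz with
      | refl => exact hc0
      | @tail b c hab' hbc' ih =>
        by_contra hc
        have : G.Adj c b ↔ ε := cross b ih c hbc'.2.1 hc
        exact he (this.mp hbc'.2.2.symm)
    have := hsub (hconn c0 (hMP hc0.1) a0 (hMP ha0.1))
    exact ha0M' this.2

/-- nontrivial proper modules of `P` -/
def NTM (G : SimpleGraph V) (P : Set V) (M : Set V) : Prop :=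
  M ⊆ P ∧ G.IsModule M ∧ 2 ≤ M.ncard ∧ M ≠ P

lemma exists_maximal [Fintype V] {G : SimpleGraph V} {P M : Set V} (hM : NTM G P M) :
    ∃ Mx, NTM G P Mx ∧ M ⊆ Mx ∧ ∀ M', NTM G P M' → Mx ⊆ M' → Mx = M' := by
  classical
  have hfin : {M' | NTM G P M' ∧ M ⊆ M'}.Finite := Set.toFinite _
  obtain ⟨Mx, hMx, hmax⟩ := Set.Finite.exists_maximalFor id _ hfin ⟨M, hM, subset_rfl⟩
  refine ⟨Mx, hMx.1, hMx.2, ?_⟩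
  intro M' hM' hsub
  exact Set.Subset.antisymm hsub (hmax ⟨hM', hMx.2.trans hsub⟩ hsub)

lemma two_lt_pow {m : ℕ} (hm : 4 ≤ m) : 2 * m + 2 < 2 ^ m := by
  induction m with
  | zero => omega
  | succ k ih =>
    rcases Nat.lt_or_ge k 4 with hk | hk
    · interval_cases k <;> simp_all <;> omega
    · have h2 : 2 ≤ 2 ^ k := Nat.one_lt_two_pow_iff.mpr (by omega)
      have := ih (by omega)
      rw [pow_succ]
      omega

end PB17
namespace PB17

variable {V : Type*}

open Set

def GoodA (G : SimpleGraph V) (P N : Set V) : Prop :=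
  ∀ M, M ⊆ P → G.IsModule M → 2 ≤ M.ncard → ((N ∩ M).Nonempty ∧ ¬ M ⊆ N)

def GoodB (G : SimpleGraph V) (P N : Set V) : Prop :=
  ∀ S, S ⊆ P → G.IsModule S → S.Nonempty → S ≠ P → ∃ u ∈ P \ S, ¬ (u ∈ N ↔ AdjTo G u S)

lemma prime_case [Fintype V] (G : SimpleGraph V) (P : Set V) (hP4 : 4 ≤ P.ncard)
    (hprime : ∀ M, M ⊆ P → G.IsModule M → 2 ≤ M.ncard → M = P) :
    ∃ N, N ⊆ P ∧ GoodA G P N ∧ GoodB G P N := by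
  classical
  set Pf := P.toFinset with hPf
  set nbr : V → Finset V := fun v => Pf.filter (fun u => G.Adj v u) with hnbr
  set Bad : Finset (Finset V) :=
    ({∅, Pf} : Finset (Finset V)) ∪ Pf.biUnion (fun v => {nbr v, insert v (nbr v)}) with hBad
  have hPcard : Pf.card = P.ncard := (Set.ncard_eq_toFinset_card' P).symm
  have hBadcard : Bad.card ≤ 2 + Pf.card * 2 := by
    refine le_trans (Finset.card_union_le _ _) (add_le_add ?_ ?_)
    · exact le_trans (Finset.card_insert_le _ _) (by simp)
    · exact le_trans (Finset.card_biUnion_le) (by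
        apply Finset.sum_le_card_nsmul
        intro x _
        exact le_trans (Finset.card_insert_le _ _) (by simp))
  have hlt : Bad.card < Pf.powerset.card := by
    rw [Finset.card_powerset]
    have := two_lt_pow (hPcard ▸ hP4)
    omega
  obtain ⟨Nf, hNfp, hNfb⟩ : ∃ Nf ∈ Pf.powerset, Nf ∉ Bad := by
    by_contra hcon
    push_neg at hcon
    exact absurd (Finset.card_le_card fun x hx => hcon x hx) (not_le.mpr hlt)
  have hNfP : (↑Nf : Set V) ⊆ P := by
    intro u hu
    have := Finset.mem_powerset.mp hNfp hu
    rwa [Set.mem_toFinset] at this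
  have hne : Nf ≠ ∅ := by
    intro h
    exact hNfb (h ▸ (by simp [hBad] : (∅ : Finset V) ∈ Bad))
  have hneP : (↑Nf : Set V) ≠ P := by
    intro h
    have : Nf = Pf := Finset.coe_injective (by rw [h, hPf, Set.coe_toFinset])
    exact hNfb (this ▸ (by simp [hBad] : Pf ∈ Bad))
  have key : ∀ v ∈ P, ∃ u ∈ P \ {v}, ¬ (u ∈ (↑Nf : Set V) ↔ G.Adj u v) := by
    intro v hv
    by_contra hcon
    push_neg at hcon
    have hall : ∀ u ∈ P \ {v}, (u ∈ (↑Nf : Set V) ↔ G.Adj u v) := by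
      intro u hu
      rcases hcon u hu with h
      tauto
    have hvPf : v ∈ Pf := Set.mem_toFinset.mpr hv
    have hNfeq : Nf = if v ∈ Nf then insert v (nbr v) else nbr v := by
      ext u
      by_cases huv : u = v
      · by_cases hvN : v ∈ Nf <;>
          simp [huv, hvN, hnbr, SimpleGraph.irrefl]
      · have hmem : u ∈ nbr v ↔ (u ∈ Nf) := by
          constructor
          · intro hu
            rw [hnbr] at hu
            simp only [Finset.mem_filter] at hu
            have huP : u ∈ P := Set.mem_toFinset.mp hu.1
            exact (hall u ⟨huP, huv⟩).mpr hu.2.symm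
          · intro hu
            have huP : u ∈ P := hNfP hu
            have : G.Adj u v := (hall u ⟨huP, huv⟩).mp hu
            rw [hnbr]
            simp only [Finset.mem_filter]
            exact ⟨Set.mem_toFinset.mpr huP, this.symm⟩
        by_cases hvN : v ∈ Nf <;> simp [hvN, huv, hmem]
    have : Nf ∈ Bad := by
      rw [hBad, Finset.mem_union]
      right
      rw [Finset.mem_biUnion]
      refine ⟨v, hvPf, ?_⟩
      rw [hNfeq]
      by_cases hvN : v ∈ Nf <;> simp [hvN]
    exact hNfb this
  refine ⟨↑Nf, hNfP, ?_, ?_⟩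
  · intro M hMP hMmod hM2
    have hMeq : M = P := hprime M hMP hMmod hM2
    subst hMeq
    constructor
    · rw [Set.inter_eq_left.mpr hNfP]
      rcases Finset.nonempty_iff_ne_empty.mpr hne with ⟨x, hx⟩
      exact ⟨x, hx⟩
    · intro hsub
      exact hneP (Set.Subset.antisymm hNfP hsub)
  · intro S hSP hSmod hSne hSneP
    have h1 : S.ncard = 1 := by
      have : ¬ 2 ≤ S.ncard := fun h2 => hSneP (hprime S hSP hSmod h2)
      have hpos : 0 < S.ncard := by
        rw [Set.ncard_pos]; exact hSne
      omega
    obtain ⟨v, rfl⟩ := Set.ncard_eq_one.mp h1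
    obtain ⟨u, hu, hxor⟩ := key v (hSP rfl)
    refine ⟨u, hu, ?_⟩
    have : AdjTo G u {v} ↔ G.Adj u v := by simp [AdjTo]
    rw [this]
    exact hxor

end PB17
namespace PB17

variable {V : Type*}

open Set

lemma disc_case [Fintype V] {G : SimpleGraph V} {P : Set V} (hmod : G.IsModule P)
    (hsmall : ∀ M, M ⊆ P → G.IsModule M → M.ncard ≠ 2 ∧ M.ncard ≠ 3)
    (hdisc : ∃ x ∈ P, ∃ y ∈ P, y ∉ comp G P x)
    (rec : ∀ Q, Q ⊆ P → Q ≠ P → G.IsModule Q → 4 ≤ Q.ncard →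
      ∃ N, N ⊆ Q ∧ GoodA G Q N ∧ GoodB G Q N) :
    ∃ N, N ⊆ P ∧ GoodA G P N ∧ GoodB G P N := by
  classical
  obtain ⟨x0, hx0, y0, hy0, hny⟩ := hdisc
  -- choice function
  set pick : Set V → Set V := fun Q =>
    if h : Q ⊆ P ∧ Q ≠ P ∧ G.IsModule Q ∧ 4 ≤ Q.ncard then
      (rec Q h.1 h.2.1 h.2.2.1 h.2.2.2).choose else ∅ with hpickdef
  have hpick : ∀ Q, Q ⊆ P → Q ≠ P → G.IsModule Q → 4 ≤ Q.ncard →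
      pick Q ⊆ Q ∧ GoodA G Q (pick Q) ∧ GoodB G Q (pick Q) := by
    intro Q h1 h2 h3 h4
    have hh : Q ⊆ P ∧ Q ≠ P ∧ G.IsModule Q ∧ 4 ≤ Q.ncard := ⟨h1, h2, h3, h4⟩
    rw [hpickdef]; simp only [dif_pos hh]
    exact (rec Q h1 h2 h3 h4).choose_spec
  -- components are proper
  have F0 : ∀ x ∈ P, comp G P x ≠ P := by
    intro x hx h
    have hx0' : x0 ∈ comp G P x := by rw [h]; exact hx0
    have : y0 ∈ comp G P x0 := by
      rw [comp_eq hx0', h]; exact hy0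
    exact hny this
  have F2 : ∀ x ∈ P, comp G P x = {x} ∨ 4 ≤ (comp G P x).ncard := by
    intro x hx
    have h1 : 0 < (comp G P x).ncard := by
      rw [Set.ncard_pos]; exact ⟨x, mem_comp_self G P x⟩
    have h23 := hsmall _ (comp_subset hx) (comp_isModule hmod hx)
    rcases Nat.lt_or_ge (comp G P x).ncard 4 with h | h
    · left
      have : (comp G P x).ncard = 1 := by omega
      obtain ⟨a, ha⟩ := Set.ncard_eq_one.mp this
      have hxa : x ∈ ({a} : Set V) := ha ▸ mem_comp_self G P x
      rw [ha, mem_singleton_iff.mp hxa]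
    · right; exact h
  have hspec : ∀ x ∈ P, 4 ≤ (comp G P x).ncard →
      pick (comp G P x) ⊆ comp G P x ∧ GoodA G (comp G P x) (pick (comp G P x)) ∧
        GoodB G (comp G P x) (pick (comp G P x)) := by
    intro x hx hbig
    exact hpick _ (comp_subset hx) (F0 x hx) (comp_isModule hmod hx) hbig
  set N : Set V := (⋃ x ∈ {x ∈ P | 4 ≤ (comp G P x).ncard}, pick (comp G P x)) ∪
    {z ∈ P | comp G P z = {z}} with hNdef
  have hmemN : ∀ u, u ∈ N ↔
      ((∃ x, (x ∈ P ∧ 4 ≤ (comp G P x).ncard) ∧ u ∈ pick (comp G P x)) ∨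
        (u ∈ P ∧ comp G P u = {u})) := by
    intro u
    rw [hNdef]
    simp only [mem_union, mem_iUnion, mem_setOf_eq, exists_prop]
  have hNsubP : N ⊆ P := by
    intro u hu
    rcases (hmemN u).mp hu with ⟨x, ⟨hx, hbig⟩, hu'⟩ | ⟨hu', _⟩
    · exact comp_subset hx ((hspec x hx hbig).1 hu')
    · exact hu'
  have F3a : ∀ y ∈ P, 4 ≤ (comp G P y).ncard → N ∩ comp G P y = pick (comp G P y) := by
    intro y hy hbig
    apply Set.Subset.antisymm
    · rintro u ⟨huN, huc⟩
      rcases (hmemN u).mp huN with ⟨x, ⟨hx, hbigx⟩, hu'⟩ | ⟨huP, hsing⟩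
      · have hux : u ∈ comp G P x := (hspec x hx hbigx).1 hu'
        have : comp G P x = comp G P y := by
          rw [← comp_eq hux, comp_eq huc]
        rwa [← this]
      · have : comp G P y = {u} := by rw [← comp_eq huc, hsing]
        rw [this] at hbig
        simp [Set.ncard_singleton] at hbig
    · intro u hu
      exact ⟨(hmemN u).mpr (Or.inl ⟨y, ⟨hy, hbig⟩, hu⟩), (hspec y hy hbig).1 hu⟩
  have F3b : ∀ z ∈ P, comp G P z = {z} → z ∈ N := by
    intro z hz hsing
    exact (hmemN z).mpr (Or.inr ⟨hz, hsing⟩)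
  refine ⟨N, hNsubP, ?_, ?_⟩
  · -- GoodA
    intro M hMP hMmod hM2
    rcases module_classify hMP hMmod with hun | ⟨x, hxM, hMsub⟩
    · have hbigx : ∃ x ∈ M, 4 ≤ (comp G P x).ncard := by
        by_contra hcon
        push_neg at hcon
        have hallsing : ∀ x ∈ M, comp G P x = {x} := by
          intro x hx
          rcases F2 x (hMP hx) with h | h
          · exact h
          · exact absurd h (by exact_mod_cast Nat.not_le.mpr (Nat.lt_of_lt_of_le (by omega) (hcon x hx)) )
        obtain ⟨a, b, ha, hb, hab⟩ := (Set.one_lt_ncard_iff (M.toFinite)).mp (by omega)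
        have hpm := pair_module hmod (hMP ha) (hMP hb) (hallsing a ha) (hallsing b hb)
        have hpairP : ({a, b} : Set V) ⊆ P := by
          intro t ht
          rcases ht with rfl | rfl
          · exact hMP ha
          · exact hMP hb
        have h2 := (hsmall {a, b} hpairP hpm).1
        rw [Set.ncard_pair hab] at h2
        exact h2 rfl
      obtain ⟨x, hxM, hbig⟩ := hbigx
      have hsp := hspec x (hMP hxM) hbig
      have hsub : comp G P x ⊆ M := hun x hxM
      obtain ⟨hne, hnsub⟩ := hsp.2.1 (comp G P x) subset_rfl (comp_isModule hmod (hMP hxM))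
        (by omega)
      constructor
      · obtain ⟨u, hu1, hu2⟩ := hne
        exact ⟨u, (hmemN u).mpr (Or.inl ⟨x, ⟨hMP hxM, hbig⟩, hu1⟩), hsub hu2⟩
      · intro hMN
        apply hnsub
        intro u hu
        have : u ∈ N ∩ comp G P x := ⟨hMN (hsub hu), hu⟩
        rwa [F3a x (hMP hxM) hbig] at this
    · have hbig : 4 ≤ (comp G P x).ncard := by
        rcases F2 x (hMP hxM) with h | h
        · exfalso
          have : M ⊆ {x} := h ▸ hMsub
          have := Set.ncard_le_ncard this (Set.finite_singleton x)
          rw [Set.ncard_singleton] at this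
          omega
        · exact h
      have hsp := hspec x (hMP hxM) hbig
      obtain ⟨hne, hnsub⟩ := hsp.2.1 M hMsub hMmod hM2
      constructor
      · obtain ⟨u, hu1, hu2⟩ := hne
        exact ⟨u, (hmemN u).mpr (Or.inl ⟨x, ⟨hMP hxM, hbig⟩, hu1⟩), hu2⟩
      · intro hMN
        apply hnsub
        intro u hu
        have : u ∈ N ∩ comp G P x := ⟨hMN hu, hMsub hu⟩
        rwa [F3a x (hMP hxM) hbig] at this
  · -- GoodB
    intro S hSP hSmod hSne hSneP
    by_cases hun : ∀ x ∈ S, comp G P x ⊆ S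
    · obtain ⟨y, hyP, hyS⟩ := Set.exists_of_ssubset (ssubset_iff_subset_ne.mpr ⟨hSP, hSneP⟩)
      have hdisj : ∀ t, t ∈ comp G P y → t ∉ S := by
        intro t ht hts
        have : y ∈ comp G P t := comp_symm ht
        exact hyS (hun t hts this)
      have hnadj : ∀ u ∈ comp G P y, ¬ AdjTo G u S := by
        rintro u hu ⟨s, hs, hadj⟩
        have hsP : s ∈ P := hSP hs
        have huP : u ∈ P := comp_subset hyP hu
        have : s ∈ comp G P u := adj_mem_comp huP hsP hadj
        exact hdisj s (comp_trans hu this) hs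
      rcases F2 y hyP with hsing | hbig
      · refine ⟨y, ⟨hyP, hyS⟩, ?_⟩
        have hyN : y ∈ N := F3b y hyP hsing
        have := hnadj y (mem_comp_self G P y)
        tauto
      · obtain ⟨u, hu1, hu2⟩ := (hspec y hyP hbig).2.1 (comp G P y) subset_rfl
          (comp_isModule hmod hyP) (by omega) |>.1
        have huN : u ∈ N := (hmemN u).mpr (Or.inl ⟨y, ⟨hyP, hbig⟩, hu1⟩)
        refine ⟨u, ⟨comp_subset hyP hu2, hdisj u hu2⟩, ?_⟩
        have := hnadj u hu2
        tauto
    · rcases module_classify hSP hSmod with h | ⟨x, hxS, hSsub⟩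
      · exact absurd h hun
      have hSnec : S ≠ comp G P x := by
        intro h
        apply hun
        intro z hz
        rw [h, comp_eq (h ▸ hz : z ∈ comp G P x)]
      have hbig : 4 ≤ (comp G P x).ncard := by
        rcases F2 x (hSP hxS) with h | h
        · exfalso
          apply hSnec
          apply Set.Subset.antisymm hSsub
          rw [h]
          intro t ht
          rw [mem_singleton_iff.mp ht]
          exact hxS
        · exact h
      obtain ⟨u, hu, hxor⟩ := (hspec x (hSP hxS) hbig).2.2 S hSsub hSmod hSne hSnec
      refine ⟨u, ⟨comp_subset (hSP hxS) hu.1, hu.2⟩, ?_⟩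
      have hiff : u ∈ N ↔ u ∈ pick (comp G P x) := by
        constructor
        · intro h
          have : u ∈ N ∩ comp G P x := ⟨h, hu.1⟩
          rwa [F3a x (hSP hxS) hbig] at this
        · intro h
          exact (hmemN u).mpr (Or.inl ⟨x, ⟨hSP hxS, hbig⟩, h⟩)
      rw [hiff]
      exact hxor

end PB17
namespace PB17

variable {V : Type*}

open Set

lemma codisc_case [Fintype V] {G : SimpleGraph V} {P : Set V} (hmod : G.IsModule P)
    (hsmall : ∀ M, M ⊆ P → G.IsModule M → M.ncard ≠ 2 ∧ M.ncard ≠ 3)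
    (hdisc : ∃ x ∈ P, ∃ y ∈ P, y ∉ comp Gᶜ P x)
    (rec : ∀ Q, Q ⊆ P → Q ≠ P → Gᶜ.IsModule Q → 4 ≤ Q.ncard →
      ∃ N, N ⊆ Q ∧ GoodA Gᶜ Q N ∧ GoodB Gᶜ Q N) :
    ∃ N, N ⊆ P ∧ GoodA G P N ∧ GoodB G P N := by
  classical
  obtain ⟨x0, hx0, y0, hy0, hny⟩ := hdisc
  have hmodc : Gᶜ.IsModule P := isModule_compl hmod
  have hsmallc : ∀ M, M ⊆ P → Gᶜ.IsModule M → M.ncard ≠ 2 ∧ M.ncard ≠ 3 :=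
    fun M h hm => hsmall M h (isModule_of_compl hm)
  set pick : Set V → Set V := fun Q =>
    if h : Q ⊆ P ∧ Q ≠ P ∧ Gᶜ.IsModule Q ∧ 4 ≤ Q.ncard then
      (rec Q h.1 h.2.1 h.2.2.1 h.2.2.2).choose else ∅ with hpickdef
  have hpick : ∀ Q, Q ⊆ P → Q ≠ P → Gᶜ.IsModule Q → 4 ≤ Q.ncard →
      pick Q ⊆ Q ∧ GoodA Gᶜ Q (pick Q) ∧ GoodB Gᶜ Q (pick Q) := by
    intro Q h1 h2 h3 h4
    have hh : Q ⊆ P ∧ Q ≠ P ∧ Gᶜ.IsModule Q ∧ 4 ≤ Q.ncard := ⟨h1, h2, h3, h4⟩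
    rw [hpickdef]; simp only [dif_pos hh]
    exact (rec Q h1 h2 h3 h4).choose_spec
  have F0 : ∀ x ∈ P, comp Gᶜ P x ≠ P := by
    intro x hx h
    have hx0' : x0 ∈ comp Gᶜ P x := by rw [h]; exact hx0
    have : y0 ∈ comp Gᶜ P x0 := by
      rw [comp_eq hx0', h]; exact hy0
    exact hny this
  have F2 : ∀ x ∈ P, comp Gᶜ P x = {x} ∨ 4 ≤ (comp Gᶜ P x).ncard := by
    intro x hx
    have h1 : 0 < (comp Gᶜ P x).ncard := by
      rw [Set.ncard_pos]; exact ⟨x, mem_comp_self Gᶜ P x⟩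
    have h23 := hsmallc _ (comp_subset hx) (comp_isModule hmodc hx)
    rcases Nat.lt_or_ge (comp Gᶜ P x).ncard 4 with h | h
    · left
      have : (comp Gᶜ P x).ncard = 1 := by omega
      obtain ⟨a, ha⟩ := Set.ncard_eq_one.mp this
      have hxa : x ∈ ({a} : Set V) := ha ▸ mem_comp_self Gᶜ P x
      rw [ha, mem_singleton_iff.mp hxa]
    · right; exact h
  have hspec : ∀ x ∈ P, 4 ≤ (comp Gᶜ P x).ncard →
      pick (comp Gᶜ P x) ⊆ comp Gᶜ P x ∧ GoodA Gᶜ (comp Gᶜ P x) (pick (comp Gᶜ P x)) ∧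
        GoodB Gᶜ (comp Gᶜ P x) (pick (comp Gᶜ P x)) := by
    intro x hx hbig
    exact hpick _ (comp_subset hx) (F0 x hx) (comp_isModule hmodc hx) hbig
  set N : Set V := ⋃ x ∈ {x ∈ P | 4 ≤ (comp Gᶜ P x).ncard},
      (comp Gᶜ P x \ pick (comp Gᶜ P x)) with hNdef
  have hmemN : ∀ u, u ∈ N ↔
      (∃ x, (x ∈ P ∧ 4 ≤ (comp Gᶜ P x).ncard) ∧
        u ∈ comp Gᶜ P x \ pick (comp Gᶜ P x)) := by
    intro u
    rw [hNdef]
    simp only [mem_iUnion, mem_setOf_eq, exists_prop]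
  have hNsubP : N ⊆ P := by
    intro u hu
    obtain ⟨x, ⟨hx, _⟩, hu'⟩ := (hmemN u).mp hu
    exact comp_subset hx hu'.1
  have F3a : ∀ y ∈ P, 4 ≤ (comp Gᶜ P y).ncard →
      N ∩ comp Gᶜ P y = comp Gᶜ P y \ pick (comp Gᶜ P y) := by
    intro y hy hbig
    apply Set.Subset.antisymm
    · rintro u ⟨huN, huc⟩
      obtain ⟨x, ⟨hx, hbigx⟩, hu'⟩ := (hmemN u).mp huN
      have : comp Gᶜ P x = comp Gᶜ P y := by
        rw [← comp_eq hu'.1, comp_eq huc]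
      rwa [← this]
    · intro u hu
      exact ⟨(hmemN u).mpr ⟨y, ⟨hy, hbig⟩, hu⟩, hu.1⟩
  refine ⟨N, hNsubP, ?_, ?_⟩
  · -- GoodA
    intro M hMP hMmod hM2
    have hMc : Gᶜ.IsModule M := isModule_compl hMmod
    rcases module_classify hMP hMc with hun | ⟨x, hxM, hMsub⟩
    · have hbigx : ∃ x ∈ M, 4 ≤ (comp Gᶜ P x).ncard := by
        by_contra hcon
        push_neg at hcon
        have hallsing : ∀ x ∈ M, comp Gᶜ P x = {x} := by
          intro x hx
          rcases F2 x (hMP hx) with h | h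
          · exact h
          · exact absurd h (Nat.not_le.mpr (Nat.lt_of_lt_of_le (by omega) (hcon x hx)))
        obtain ⟨a, b, ha, hb, hab⟩ := (Set.one_lt_ncard_iff (M.toFinite)).mp (by omega)
        have hpm := pair_module hmodc (hMP ha) (hMP hb) (hallsing a ha) (hallsing b hb)
        have hpairP : ({a, b} : Set V) ⊆ P := by
          intro t ht
          rcases ht with rfl | rfl
          · exact hMP ha
          · exact hMP hb
        have h2 := (hsmallc {a, b} hpairP hpm).1
        rw [Set.ncard_pair hab] at h2
        exact h2 rfl
      obtain ⟨x, hxM, hbig⟩ := hbigx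
      have hsp := hspec x (hMP hxM) hbig
      have hsub : comp Gᶜ P x ⊆ M := hun x hxM
      obtain ⟨hne, hnsub⟩ := hsp.2.1 (comp Gᶜ P x) subset_rfl (comp_isModule hmodc (hMP hxM))
        (by omega)
      rw [Set.not_subset] at hnsub
      obtain ⟨t, htc, htp⟩ := hnsub
      constructor
      · refine ⟨t, (hmemN t).mpr ⟨x, ⟨hMP hxM, hbig⟩, htc, htp⟩, hsub htc⟩
      · intro hMN
        obtain ⟨u, hup, huc⟩ := hne
        have : u ∈ N ∩ comp Gᶜ P x := ⟨hMN (hsub huc), huc⟩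
        rw [F3a x (hMP hxM) hbig] at this
        exact this.2 hup
    · have hbig : 4 ≤ (comp Gᶜ P x).ncard := by
        rcases F2 x (hMP hxM) with h | h
        · exfalso
          have : M ⊆ {x} := h ▸ hMsub
          have := Set.ncard_le_ncard this (Set.finite_singleton x)
          rw [Set.ncard_singleton] at this
          omega
        · exact h
      have hsp := hspec x (hMP hxM) hbig
      obtain ⟨hne, hnsub⟩ := hsp.2.1 M hMsub hMc hM2
      rw [Set.not_subset] at hnsub
      obtain ⟨t, htM, htp⟩ := hnsub
      constructor
      · exact ⟨t, (hmemN t).mpr ⟨x, ⟨hMP hxM, hbig⟩, hMsub htM, htp⟩, htM⟩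
      · intro hMN
        obtain ⟨u, hup, huM⟩ := hne
        have : u ∈ N ∩ comp Gᶜ P x := ⟨hMN huM, hMsub huM⟩
        rw [F3a x (hMP hxM) hbig] at this
        exact this.2 hup
  · -- GoodB
    intro S hSP hSmod hSne hSneP
    have hSc : Gᶜ.IsModule S := isModule_compl hSmod
    by_cases hun : ∀ x ∈ S, comp Gᶜ P x ⊆ S
    · obtain ⟨y, hyP, hyS⟩ := Set.exists_of_ssubset (ssubset_iff_subset_ne.mpr ⟨hSP, hSneP⟩)
      have hdisj : ∀ t, t ∈ comp Gᶜ P y → t ∉ S := by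
        intro t ht hts
        have : y ∈ comp Gᶜ P t := comp_symm ht
        exact hyS (hun t hts this)
      have hadjall : ∀ u ∈ comp Gᶜ P y, AdjTo G u S := by
        intro u hu
        obtain ⟨s0, hs0⟩ := hSne
        refine ⟨s0, hs0, ?_⟩
        have hne' : u ≠ s0 := fun h => hdisj u hu (h ▸ hs0)
        have hnc : ¬ Gᶜ.Adj u s0 := by
          intro hadj
          have hs0P : s0 ∈ P := hSP hs0
          have huP : u ∈ P := comp_subset hyP hu
          have : s0 ∈ comp Gᶜ P u := adj_mem_comp huP hs0P hadj
          exact hdisj s0 (comp_trans hu this) hs0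
        rw [SimpleGraph.compl_adj] at hnc
        push_neg at hnc
        exact hnc hne'
      rcases F2 y hyP with hsing | hbig
      · refine ⟨y, ⟨hyP, hyS⟩, ?_⟩
        have hyN : y ∉ N := by
          intro hyN
          obtain ⟨x, ⟨hx, hbigx⟩, hu'⟩ := (hmemN y).mp hyN
          have : comp Gᶜ P x = comp Gᶜ P y := by
            rw [← comp_eq hu'.1]
          rw [this, hsing] at hbigx
          simp [Set.ncard_singleton] at hbigx
        have := hadjall y (mem_comp_self Gᶜ P y)
        tauto
      · obtain ⟨u, hu1, hu2⟩ := (hspec y hyP hbig).2.1 (comp Gᶜ P y) subset_rfl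
          (comp_isModule hmodc hyP) (by omega) |>.1
        have huN : u ∉ N := by
          intro huN
          have : u ∈ N ∩ comp Gᶜ P y := ⟨huN, hu2⟩
          rw [F3a y hyP hbig] at this
          exact this.2 hu1
        refine ⟨u, ⟨comp_subset hyP hu2, hdisj u hu2⟩, ?_⟩
        have := hadjall u hu2
        tauto
    · rcases module_classify hSP hSc with h | ⟨x, hxS, hSsub⟩
      · exact absurd h hun
      have hSnec : S ≠ comp Gᶜ P x := by
        intro h
        apply hun
        intro z hz
        rw [h, comp_eq (h ▸ hz : z ∈ comp Gᶜ P x)]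
      have hbig : 4 ≤ (comp Gᶜ P x).ncard := by
        rcases F2 x (hSP hxS) with h | h
        · exfalso
          apply hSnec
          apply Set.Subset.antisymm hSsub
          rw [h]
          intro t ht
          rw [mem_singleton_iff.mp ht]
          exact hxS
        · exact h
      obtain ⟨u, hu, hxor⟩ := (hspec x (hSP hxS) hbig).2.2 S hSsub hSc hSne hSnec
      refine ⟨u, ⟨comp_subset (hSP hxS) hu.1, hu.2⟩, ?_⟩
      have hiff : u ∈ N ↔ u ∉ pick (comp Gᶜ P x) := by
        constructor
        · intro h hp
          have : u ∈ N ∩ comp Gᶜ P x := ⟨h, hu.1⟩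
          rw [F3a x (hSP hxS) hbig] at this
          exact this.2 hp
        · intro h
          exact (hmemN u).mpr ⟨x, ⟨hSP hxS, hbig⟩, hu.1, h⟩
      have hadjiff : AdjTo Gᶜ u S ↔ ¬ AdjTo G u S := adjTo_compl hSmod hu.2 hSne
      rw [hiff]
      rw [hadjiff] at hxor
      tauto

end PB17
namespace PB17

variable {V : Type*}

open Set

def MaxM (G : SimpleGraph V) (P : Set V) (M : Set V) : Prop :=
  NTM G P M ∧ ∀ M', NTM G P M' → M ⊆ M' → M = M'

lemma conn_case [Fintype V] {G : SimpleGraph V} {P : Set V} (hmod : G.IsModule P)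
    (hsmall : ∀ M, M ⊆ P → G.IsModule M → M.ncard ≠ 2 ∧ M.ncard ≠ 3)
    (hconn : ∀ x ∈ P, ∀ y ∈ P, y ∈ comp G P x)
    (hcoconn : ∀ x ∈ P, ∀ y ∈ P, y ∈ comp Gᶜ P x)
    (hM0 : ∃ M0, NTM G P M0)
    (rec : ∀ Q, Q ⊆ P → Q ≠ P → G.IsModule Q → 4 ≤ Q.ncard →
      ∃ N, N ⊆ Q ∧ GoodA G Q N ∧ GoodB G Q N) :
    ∃ N, N ⊆ P ∧ GoodA G P N ∧ GoodB G P N := by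
  classical
  have hbig4 : ∀ M, NTM G P M → 4 ≤ M.ncard := by
    intro M hM
    have := hsmall M hM.1 hM.2.1
    have h2 := hM.2.2.1
    omega
  have hdisjoint : ∀ M M', MaxM G P M → MaxM G P M' → M ≠ M' → M ∩ M' = ∅ := by
    intro M M' hM hM' hne
    by_contra hcon
    have hIne : (M ∩ M').Nonempty := Set.nonempty_iff_ne_empty.mpr hcon
    have hMsubM' : ¬ M ⊆ M' := by
      intro h
      exact hne (hM.2 M' hM'.1 h)
    have hM'subM : ¬ M' ⊆ M := by
      intro h
      exact hne ((hM'.2 M hM.1 h).symm)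
    have hUmod : G.IsModule (M ∪ M') := isModule_union hM.1.2.1 hM'.1.2.1 hIne
    have hUsubP : M ∪ M' ⊆ P := Set.union_subset hM.1.1 hM'.1.1
    by_cases hU : M ∪ M' = P
    · obtain ⟨a, haM, haM'⟩ := Set.not_subset.mp hMsubM'
      obtain ⟨b, hbM', hbM⟩ := Set.not_subset.mp hM'subM
      exact crossing hM.1.1 hM'.1.1 hM.1.2.1 hM'.1.2.1 hU ⟨a, haM, haM'⟩ ⟨b, hbM', hbM⟩
        hIne hconn hcoconn
    · have hNTMU : NTM G P (M ∪ M') := by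
        refine ⟨hUsubP, hUmod, ?_, hU⟩
        exact le_trans hM.1.2.2.1 (Set.ncard_le_ncard subset_union_left (Set.toFinite _))
      have := hM.2 (M ∪ M') hNTMU subset_union_left
      exact hM'subM (this ▸ subset_union_right)
  have hmax_of : ∀ M, NTM G P M → ∃ Mx, MaxM G P Mx ∧ M ⊆ Mx := by
    intro M hM
    obtain ⟨Mx, h1, h2, h3⟩ := exists_maximal hM
    exact ⟨Mx, ⟨h1, h3⟩, h2⟩
  set pick : Set V → Set V := fun Q =>
    if h : Q ⊆ P ∧ Q ≠ P ∧ G.IsModule Q ∧ 4 ≤ Q.ncard then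
      (rec Q h.1 h.2.1 h.2.2.1 h.2.2.2).choose else ∅ with hpickdef
  have hpick : ∀ Q, Q ⊆ P → Q ≠ P → G.IsModule Q → 4 ≤ Q.ncard →
      pick Q ⊆ Q ∧ GoodA G Q (pick Q) ∧ GoodB G Q (pick Q) := by
    intro Q h1 h2 h3 h4
    have hh : Q ⊆ P ∧ Q ≠ P ∧ G.IsModule Q ∧ 4 ≤ Q.ncard := ⟨h1, h2, h3, h4⟩
    rw [hpickdef]; simp only [dif_pos hh]
    exact (rec Q h1 h2 h3 h4).choose_spec
  have hspec : ∀ M, MaxM G P M →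
      pick M ⊆ M ∧ GoodA G M (pick M) ∧ GoodB G M (pick M) := by
    intro M hM
    exact hpick M hM.1.1 hM.1.2.2.2 hM.1.2.1 (hbig4 M hM.1)
  -- pick nonempty and proper, for maximal M
  have hpickprop : ∀ M, MaxM G P M → (pick M).Nonempty ∧ ¬ M ⊆ pick M := by
    intro M hM
    obtain ⟨hne, hns⟩ := (hspec M hM).2.1 M subset_rfl hM.1.2.1 hM.1.2.2.1
    exact ⟨hne.imp (fun u hu => hu.1), hns⟩
  obtain ⟨M0, hM0'⟩ := hM0
  obtain ⟨P1, hP1max, _⟩ := hmax_of M0 hM0'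
  set N : Set V := (⋃ M ∈ {M | MaxM G P M}, pick M) ∪
    {v ∈ P | (∀ M, MaxM G P M → v ∉ M) ∧ ¬ AdjTo G v P1} with hNdef
  have hmemN : ∀ u, u ∈ N ↔
      ((∃ M, MaxM G P M ∧ u ∈ pick M) ∨
        (u ∈ P ∧ (∀ M, MaxM G P M → u ∉ M) ∧ ¬ AdjTo G u P1)) := by
    intro u
    rw [hNdef]
    simp only [mem_union, mem_iUnion, mem_setOf_eq, exists_prop]
  have hNsubP : N ⊆ P := by
    intro u hu
    rcases (hmemN u).mp hu with ⟨M, hM, hu'⟩ | ⟨hu', _⟩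
    · exact hM.1.1 ((hspec M hM).1 hu')
    · exact hu'
  have F3 : ∀ M, MaxM G P M → N ∩ M = pick M := by
    intro M hM
    apply Set.Subset.antisymm
    · rintro u ⟨huN, huM⟩
      rcases (hmemN u).mp huN with ⟨M', hM', hu'⟩ | ⟨_, hfree, _⟩
      · by_cases he : M' = M
        · exact he ▸ hu'
        · exfalso
          have := hdisjoint M' M hM' hM he
          have : u ∈ M' ∩ M := ⟨(hspec M' hM').1 hu', huM⟩
          rw [hdisjoint M' M hM' hM he] at this
          exact this
      · exact absurd huM (hfree M hM)
    · intro u hu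
      exact ⟨(hmemN u).mpr (Or.inl ⟨M, hM, hu⟩), (hspec M hM).1 hu⟩
  refine ⟨N, hNsubP, ?_, ?_⟩
  · -- GoodA
    intro M hMP hMmod hM2
    by_cases hMeqP : M = P
    · subst hMeqP
      obtain ⟨hne, hns⟩ := hpickprop P1 hP1max
      constructor
      · obtain ⟨u, hu⟩ := hne
        exact ⟨u, (hmemN u).mpr (Or.inl ⟨P1, hP1max, hu⟩),
          hP1max.1.1 ((hspec P1 hP1max).1 hu)⟩
      · intro hsub
        apply hns
        intro u hu
        have : u ∈ N ∩ P1 := ⟨hsub (hP1max.1.1 hu), hu⟩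
        rwa [F3 P1 hP1max] at this
    · obtain ⟨Mx, hMx, hMsub⟩ := hmax_of M ⟨hMP, hMmod, hM2, hMeqP⟩
      obtain ⟨hne, hns⟩ := (hspec Mx hMx).2.1 M hMsub hMmod hM2
      constructor
      · obtain ⟨u, hu1, hu2⟩ := hne
        exact ⟨u, (hmemN u).mpr (Or.inl ⟨Mx, hMx, hu1⟩), hu2⟩
      · intro hsub
        apply hns
        intro u hu
        have : u ∈ N ∩ Mx := ⟨hsub hu, hMsub hu⟩
        rwa [F3 Mx hMx] at this
  · -- GoodB
    intro S hSP hSmod hSne hSneP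
    by_cases h2 : 2 ≤ S.ncard
    · obtain ⟨Mx, hMx, hMsub⟩ := hmax_of S ⟨hSP, hSmod, h2, hSneP⟩
      by_cases hSMx : S = Mx
      · by_cases hother : ∃ M', MaxM G P M' ∧ M' ≠ Mx
        · obtain ⟨M', hM', hneM'⟩ := hother
          obtain ⟨hne', hns'⟩ := hpickprop M' hM'
          obtain ⟨u1, hu1⟩ := hne'
          obtain ⟨u2, hu2M, hu2p⟩ := Set.not_subset.mp hns'
          have hu1M : u1 ∈ M' := (hspec M' hM').1 hu1
          have hdisj := hdisjoint M' Mx hM' hMx hneM'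
          obtain ⟨s0, hs0⟩ := hSne
          have hu1S : u1 ∉ S := by
            intro h
            have : u1 ∈ M' ∩ Mx := ⟨hu1M, hMsub (hSMx ▸ h : u1 ∈ S)⟩
            rw [hdisj] at this; exact this
          have hu2S : u2 ∉ S := by
            intro h
            have : u2 ∈ M' ∩ Mx := ⟨hu2M, hMsub h⟩
            rw [hdisj] at this; exact this
          have hs0M' : s0 ∉ M' := by
            intro h
            have : s0 ∈ M' ∩ Mx := ⟨h, hMsub hs0⟩
            rw [hdisj] at this; exact this
          have hadjiff : AdjTo G u1 S ↔ AdjTo G u2 S := by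
            rw [adjTo_iff hSmod hu1S hs0, adjTo_iff hSmod hu2S hs0,
              SimpleGraph.adj_comm, SimpleGraph.adj_comm (v := s0)]
            exact uniform hM'.1.2.1 hs0M' hu1M hu2M
          have hu1N : u1 ∈ N := (hmemN u1).mpr (Or.inl ⟨M', hM', hu1⟩)
          have hu2N : u2 ∉ N := by
            intro h
            have : u2 ∈ N ∩ M' := ⟨h, hu2M⟩
            rw [F3 M' hM'] at this
            exact hu2p this
          by_cases hadj : AdjTo G u2 S
          · refine ⟨u2, ⟨hM'.1.1 hu2M, hu2S⟩, ?_⟩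
            tauto
          · refine ⟨u1, ⟨hM'.1.1 hu1M, hu1S⟩, ?_⟩
            have : ¬ AdjTo G u1 S := fun h => hadj (hadjiff.mp h)
            tauto
        · push_neg at hother
          have hP1Mx : P1 = Mx := hother P1 hP1max
          obtain ⟨v, hvP, hvMx⟩ := Set.exists_of_ssubset
            (ssubset_iff_subset_ne.mpr ⟨hMx.1.1, hMx.1.2.2.2⟩)
          have hvfree : ∀ M, MaxM G P M → v ∉ M := by
            intro M hM
            rw [hother M hM]
            exact hvMx
          have hvN : v ∈ N ↔ ¬ AdjTo G v P1 := by
            constructor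
            · intro h
              rcases (hmemN v).mp h with ⟨M', hM', hv'⟩ | ⟨_, _, hna⟩
              · exact absurd ((hspec M' hM').1 hv') (hvfree M' hM')
              · exact hna
            · intro h
              exact (hmemN v).mpr (Or.inr ⟨hvP, hvfree, h⟩)
          refine ⟨v, ⟨hvP, fun h => hvMx (hMsub h)⟩, ?_⟩
          have hSP1 : S = P1 := hSMx.trans hP1Mx.symm
          rw [hvN, ← hSP1]
          tauto
      · obtain ⟨u, hu, hxor⟩ := (hspec Mx hMx).2.2 S hMsub hSmod hSne hSMx
        refine ⟨u, ⟨hMx.1.1 hu.1, hu.2⟩, ?_⟩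
        have hiff : u ∈ N ↔ u ∈ pick Mx := by
          constructor
          · intro h
            have : u ∈ N ∩ Mx := ⟨h, hu.1⟩
            rwa [F3 Mx hMx] at this
          · intro h
            exact (hmemN u).mpr (Or.inl ⟨Mx, hMx, h⟩)
        rw [hiff]
        exact hxor
    · -- singleton S
      have h1 : S.ncard = 1 := by
        have hpos : 0 < S.ncard := by rw [Set.ncard_pos]; exact hSne
        omega
      obtain ⟨s, rfl⟩ := Set.ncard_eq_one.mp h1
      have hsP : s ∈ P := hSP rfl
      by_cases hsM : ∃ M, MaxM G P M ∧ s ∈ M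
      · obtain ⟨M, hM, hsMm⟩ := hsM
        have hsub : ({s} : Set V) ⊆ M := by
          intro t ht; rw [mem_singleton_iff.mp ht]; exact hsMm
        have hneM : ({s} : Set V) ≠ M := by
          intro h
          have := hbig4 M hM.1
          rw [← h, Set.ncard_singleton] at this
          omega
        obtain ⟨u, hu, hxor⟩ := (hspec M hM).2.2 {s} hsub hSmod ⟨s, rfl⟩ hneM
        refine ⟨u, ⟨hM.1.1 hu.1, hu.2⟩, ?_⟩
        have hiff : u ∈ N ↔ u ∈ pick M := by
          constructor
          · intro h
            have : u ∈ N ∩ M := ⟨h, hu.1⟩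
            rwa [F3 M hM] at this
          · intro h
            exact (hmemN u).mpr (Or.inl ⟨M, hM, h⟩)
        rw [hiff]
        exact hxor
      · push_neg at hsM
        by_contra hcon
        push_neg at hcon
        have hall : ∀ u ∈ P \ {s}, (u ∈ N ↔ G.Adj u s) := by
          intro u hu
          have hAd : AdjTo G u ({s} : Set V) ↔ G.Adj u s := by simp [AdjTo]
          exact (hcon u hu).trans hAd
        have hsP1 : s ∉ P1 := hsM P1 hP1max
        obtain ⟨hpne, hpns⟩ := hpickprop P1 hP1max
        rcases hP1max.1.2.1 s hsP1 with hadj | hnadj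
        · -- s adjacent to all of P1 : P1 ⊆ N
          have : P1 ⊆ pick P1 := by
            intro u hu
            have huP : u ∈ P := hP1max.1.1 hu
            have hus : u ≠ s := fun h => hsP1 (h ▸ hu)
            have huN : u ∈ N := (hall u ⟨huP, hus⟩).mpr (hadj u hu).symm
            have : u ∈ N ∩ P1 := ⟨huN, hu⟩
            rwa [F3 P1 hP1max] at this
          exact hpns this
        · -- s adjacent to none of P1 : pick P1 empty
          obtain ⟨u, hu⟩ := hpne
          have huP1 : u ∈ P1 := (hspec P1 hP1max).1 hu
          have huP : u ∈ P := hP1max.1.1 huP1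
          have hus : u ≠ s := fun h => hsP1 (h ▸ huP1)
          have huN : u ∈ N := (hmemN u).mpr (Or.inl ⟨P1, hP1max, hu⟩)
          have := (hall u ⟨huP, hus⟩).mp huN
          exact (hnadj u huP1) this.symm

end PB17
namespace PB17

variable {V : Type*}

open Set

theorem aux [Fintype V] : ∀ (n : ℕ) (G : SimpleGraph V) (P : Set V), P.ncard ≤ n →
    G.IsModule P → 4 ≤ P.ncard →
    (∀ M, M ⊆ P → G.IsModule M → M.ncard ≠ 2 ∧ M.ncard ≠ 3) →
    ∃ N, N ⊆ P ∧ GoodA G P N ∧ GoodB G P N := by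
  intro n
  induction n with
  | zero => intro G P hn _ h4 _; omega
  | succ n ih =>
    intro G P hn hmod h4 hsmall
    have hrec : ∀ Q, Q ⊆ P → Q ≠ P → G.IsModule Q → 4 ≤ Q.ncard →
        ∃ N, N ⊆ Q ∧ GoodA G Q N ∧ GoodB G Q N := by
      intro Q h1 h2 h3 hq4
      apply ih G Q ?_ h3 hq4 (fun M hM hm => hsmall M (hM.trans h1) hm)
      have : Q.ncard < P.ncard :=
        Set.ncard_lt_ncard (ssubset_iff_subset_ne.mpr ⟨h1, h2⟩) (Set.toFinite P)
      omega
    have hrecC : ∀ Q, Q ⊆ P → Q ≠ P → Gᶜ.IsModule Q → 4 ≤ Q.ncard →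
        ∃ N, N ⊆ Q ∧ GoodA Gᶜ Q N ∧ GoodB Gᶜ Q N := by
      intro Q h1 h2 h3 hq4
      apply ih Gᶜ Q ?_ h3 hq4
      · intro M hM hm
        exact hsmall M (hM.trans h1) (isModule_of_compl hm)
      · have : Q.ncard < P.ncard :=
          Set.ncard_lt_ncard (ssubset_iff_subset_ne.mpr ⟨h1, h2⟩) (Set.toFinite P)
        omega
    by_cases hdisc : ∃ x ∈ P, ∃ y ∈ P, y ∉ comp G P x
    · exact disc_case hmod hsmall hdisc hrec
    by_cases hcodisc : ∃ x ∈ P, ∃ y ∈ P, y ∉ comp Gᶜ P x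
    · exact codisc_case hmod hsmall hcodisc hrecC
    by_cases hM0 : ∃ M0, NTM G P M0
    · push_neg at hdisc hcodisc
      exact conn_case hmod hsmall hdisc hcodisc hM0 hrec
    · push_neg at hM0
      apply prime_case G P h4
      intro M hMP hMmod hM2
      by_contra hne
      exact (hM0 M) ⟨hMP, hMmod, hM2, hne⟩

end PB17
namespace PB17

variable {V : Type*}

open Set

lemma pair_module_of_uniform {G : SimpleGraph V} {a b : V}
    (h : ∀ v, v ≠ a → v ≠ b → (G.Adj v a ↔ G.Adj v b)) : G.IsModule {a, b} := by
  intro v hv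
  simp only [mem_insert_iff, mem_singleton_iff] at hv
  push_neg at hv
  by_cases hadj : G.Adj v a
  · left
    rintro m (rfl | rfl)
    · exact hadj
    · exact (h v hv.1 hv.2).mp hadj
  · right
    rintro m (rfl | rfl)
    · exact hadj
    · exact fun hc => hadj ((h v hv.1 hv.2).mpr hc)

lemma cliqueNumber_ge_two [Fintype V] {G : SimpleGraph V} {a b : V} (hab : a ≠ b)
    (hM : G.IsModule {a, b}) (hadj : G.Adj a b) : 2 ≤ G.modularCliqueNumber := by
  have hclique : G.IsClique {a, b} := by
    rw [SimpleGraph.isClique_iff]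
    rintro x (rfl | rfl) y (rfl | rfl) hxy
    · exact absurd rfl hxy
    · exact hadj
    · exact hadj.symm
    · exact absurd rfl hxy
  have hbdd : BddAbove {n : ℕ | ∃ M : Set V, G.IsModule M ∧ G.IsClique M ∧ M.ncard = n} := by
    refine ⟨Fintype.card V, ?_⟩
    rintro n ⟨M, _, _, rfl⟩
    have := Set.ncard_le_ncard (Set.subset_univ M) (Set.toFinite _)
    rwa [Set.ncard_univ, Nat.card_eq_fintype_card] at this
  exact le_csSup hbdd ⟨{a, b}, hM, hclique, Set.ncard_pair hab⟩

lemma no_small_modules [Fintype V] {G : SimpleGraph V}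
    (ha : G.modularStabilityNumber = 1) (hw : G.modularCliqueNumber = 1) :
    ∀ M : Set V, G.IsModule M → M.ncard ≠ 2 ∧ M.ncard ≠ 3 := by
  have no2 : ∀ M : Set V, G.IsModule M → M.ncard ≠ 2 := by
    intro M hM h2
    obtain ⟨a, b, hab, rfl⟩ := Set.ncard_eq_two.mp h2
    by_cases hadj : G.Adj a b
    · have := cliqueNumber_ge_two hab hM hadj
      omega
    · have hcadj : Gᶜ.Adj a b := by
        rw [SimpleGraph.compl_adj]; exact ⟨hab, hadj⟩
      have := cliqueNumber_ge_two hab (isModule_compl hM) hcadj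
      rw [← SimpleGraph.modularStabilityNumber] at this
      omega
  intro M hM
  refine ⟨no2 M hM, ?_⟩
  intro h3
  obtain ⟨x, y, z, hxy, hxz, hyz, rfl⟩ := Set.ncard_eq_three.mp h3
  have hout : ∀ v, v ∉ ({x, y, z} : Set V) → ∀ a ∈ ({x, y, z} : Set V),
      ∀ b ∈ ({x, y, z} : Set V), (G.Adj v a ↔ G.Adj v b) := by
    intro v hv a haM b hbM
    exact uniform hM hv haM hbM
  have hxM : x ∈ ({x, y, z} : Set V) := by simp
  have hyM : y ∈ ({x, y, z} : Set V) := by simp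
  have hzM : z ∈ ({x, y, z} : Set V) := by simp
  by_cases h1 : G.Adj z x ↔ G.Adj z y
  · have hpm : G.IsModule {x, y} := by
      apply pair_module_of_uniform
      intro v hvx hvy
      by_cases hvz : v = z
      · subst hvz; exact h1
      · exact hout v (by simp [hvx, hvy, hvz]) x hxM y hyM
    exact no2 _ hpm (Set.ncard_pair hxy)
  by_cases h2 : G.Adj y x ↔ G.Adj y z
  · have hpm : G.IsModule {x, z} := by
      apply pair_module_of_uniform
      intro v hvx hvz
      by_cases hvy : v = y
      · subst hvy; exact h2
      · exact hout v (by simp [hvx, hvz, hvy]) x hxM z hzM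
    exact no2 _ hpm (Set.ncard_pair hxz)
  · have h3' : G.Adj x y ↔ G.Adj x z := by
      rw [G.adj_comm x y, G.adj_comm x z]
      rw [G.adj_comm z x, G.adj_comm z y] at h1
      rw [G.adj_comm y x] at h2
      tauto
    have hpm : G.IsModule {y, z} := by
      apply pair_module_of_uniform
      intro v hvy hvz
      by_cases hvx : v = x
      · subst hvx; exact h3'
      · exact hout v (by simp [hvy, hvz, hvx]) y hyM z hzM
    exact no2 _ hpm (Set.ncard_pair hyz)

/-- the one-vertex extension along `N` -/
def ext1 (G : SimpleGraph V) (N : Set V) : SimpleGraph (V ⊕ Fin 1) where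
  Adj a b := match a, b with
    | Sum.inl u, Sum.inl v => G.Adj u v
    | Sum.inl u, Sum.inr _ => u ∈ N
    | Sum.inr _, Sum.inl v => v ∈ N
    | Sum.inr _, Sum.inr _ => False
  symm := by
    constructor
    rintro (u | u) (v | v) h
    · exact h.symm
    · exact h
    · exact h
    · exact h
  loopless := by
    constructor
    rintro (u | u) h
    · exact G.loopless.irrefl u h
    · exact h

lemma ext1_prime [Fintype V] {G : SimpleGraph V} {N : Set V} (hcard : 4 ≤ Fintype.card V)
    (hA : GoodA G Set.univ N) (hB : GoodB G Set.univ N) :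
    (ext1 G N).IsPrimeGraph := by
  classical
  constructor
  · rw [Fintype.card_sum, Fintype.card_fin]
    omega
  intro M' hM'mod
  set S : Set V := {v : V | Sum.inl v ∈ M'} with hSdef
  have hSmod : G.IsModule S := by
    intro v hv
    rcases hM'mod (Sum.inl v) hv with h | h
    · left; intro m hm; exact h (Sum.inl m) hm
    · right; intro m hm; exact fun hadj => h (Sum.inl m) hm hadj
  by_cases hw : (Sum.inr 0 : V ⊕ Fin 1) ∈ M'
  · by_cases hS0 : S = ∅
    · right; left
      refine ⟨Sum.inr 0, ?_⟩
      ext a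
      constructor
      · intro ha
        match a with
        | Sum.inl u =>
          exact absurd (show u ∈ S from ha) (by rw [hS0]; exact notMem_empty u)
        | Sum.inr i =>
          have : i = 0 := Subsingleton.elim i 0
          rw [mem_singleton_iff, this]
      · intro ha
        rw [mem_singleton_iff] at ha
        rw [ha]; exact hw
    by_cases hSu : S = univ
    · right; right
      rw [eq_univ_iff_forall]
      intro a
      match a with
      | Sum.inl u => exact (hSu ▸ mem_univ u : u ∈ S)
      | Sum.inr i =>
        have : i = 0 := Subsingleton.elim i 0
        rw [this]; exact hw
    · exfalso
      obtain ⟨u, hu, hxor⟩ := hB S (subset_univ S) hSmod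
        (nonempty_iff_ne_empty.mpr hS0) hSu
      have huS : u ∉ S := hu.2
      obtain ⟨s, hs⟩ := nonempty_iff_ne_empty.mpr hS0
      rcases hM'mod (Sum.inl u) huS with h | h
      · exact hxor (iff_of_true (h (Sum.inr 0) hw) ⟨s, hs, h (Sum.inl s) hs⟩)
      · refine hxor (iff_of_false (fun hN => h (Sum.inr 0) hw hN) ?_)
        rintro ⟨t, ht, hadj⟩
        exact h (Sum.inl t) ht hadj
  · have h01 : S = ∅ ∨ (∃ v, S = {v}) := by
      by_contra hcon
      push_neg at hcon
      have h2 : 2 ≤ S.ncard := by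
        have hpos : 0 < S.ncard := by
          rw [Set.ncard_pos]
          exact hcon.1
        have hne1 : S.ncard ≠ 1 := by
          intro h
          obtain ⟨v, hv⟩ := Set.ncard_eq_one.mp h
          exact hcon.2 v hv
        omega
      obtain ⟨⟨a, haN, haS⟩, hns⟩ := hA S (subset_univ S) hSmod h2
      obtain ⟨b, hbS, hbN⟩ := Set.not_subset.mp hns
      rcases hM'mod (Sum.inr 0) hw with h | h
      · exact hbN (h (Sum.inl b) hbS)
      · exact h (Sum.inl a) haS haN
    rcases h01 with h | ⟨v, hv⟩
    · left
      rw [eq_empty_iff_forall_notMem]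
      intro a ha
      match a with
      | Sum.inl u => exact (h ▸ (ha : u ∈ S) : u ∈ (∅ : Set V))
      | Sum.inr i =>
        have : i = 0 := Subsingleton.elim i 0
        rw [this] at ha
        exact hw ha
    · right; left
      refine ⟨Sum.inl v, ?_⟩
      ext a
      constructor
      · intro ha
        match a with
        | Sum.inl u =>
          have : u ∈ S := ha
          rw [hv, mem_singleton_iff] at this
          rw [mem_singleton_iff, this]
        | Sum.inr i =>
          have : i = 0 := Subsingleton.elim i 0
          rw [this] at ha
          exact absurd ha hw
      · intro ha
        rw [mem_singleton_iff] at ha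
        rw [ha]
        exact (hv ▸ (mem_singleton_iff.mpr rfl : v ∈ ({v} : Set V)) : v ∈ S)

end PB17
/-- a non-prime graph on at least 4 vertices with
`α_M(G) = ω_M(G) = 1` satisfies `p(G) = 1`. -/
theorem primeBound_eq_one_of_modular_numbers_one {V : Type*} [Fintype V]
    (G : SimpleGraph V) (hnp : ¬ G.IsPrimeGraph) (hcard : 4 ≤ Fintype.card V)
    (ha : G.modularStabilityNumber = 1) (hw : G.modularCliqueNumber = 1) :
    G.primeBound = 1 := by
  classical
  have hsmall := PB17.no_small_modules ha hw
  have hunivmod : G.IsModule (Set.univ : Set V) := fun v hv => absurd (Set.mem_univ v) hv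
  have hucard : (Set.univ : Set V).ncard = Fintype.card V := by
    rw [Set.ncard_univ, Nat.card_eq_fintype_card]
  obtain ⟨N, -, hA, hB⟩ := PB17.aux (Fintype.card V) G Set.univ (le_of_eq hucard)
    hunivmod (hucard ▸ hcard) (fun M _ hm => hsmall M hm)
  set S01 : Set ℕ :=
    {p : ℕ | ∃ H : SimpleGraph (V ⊕ Fin p), G.IsExtension H ∧ H.IsPrimeGraph} with hS01
  have h1 : 1 ∈ S01 := by
    refine ⟨PB17.ext1 G N, ?_, PB17.ext1_prime hcard hA hB⟩
    intro u v
    exact Iff.rfl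
  have h0 : 0 ∉ S01 := by
    rintro ⟨H, hext, hprime⟩
    have hM : ∃ M : Set V, G.IsModule M ∧
        ¬(M = ∅ ∨ (∃ v, M = {v}) ∨ M = Set.univ) := by
      by_contra hcon
      push_neg at hcon
      exact hnp ⟨hcard, fun M hM => hcon M hM⟩
    obtain ⟨M, hMmod, hMnt⟩ := hM
    have himg : H.IsModule (Sum.inl '' M) := by
      intro a ha
      match a with
      | Sum.inl x =>
        have hx : x ∉ M := fun h => ha (Set.mem_image_of_mem _ h)
        rcases hMmod x hx with h | h
        · left; rintro m ⟨m', hm', rfl⟩; exact (hext x m').mpr (h m' hm')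
        · right; rintro m ⟨m', hm', rfl⟩ hadj; exact h m' hm' ((hext x m').mp hadj)
      | Sum.inr i => exact i.elim0
    rcases hprime.2 _ himg with h | ⟨v, hv⟩ | h
    · exact hMnt (Or.inl (Set.image_eq_empty.mp h))
    · apply hMnt
      right; left
      have hMne : M.Nonempty := by
        rcases Set.eq_empty_or_nonempty M with h' | h'
        · rw [h', Set.image_empty] at hv
          exact absurd hv.symm (Set.singleton_ne_empty v)
        · exact h'
      obtain ⟨x, hx⟩ := hMne
      have hvx : v = Sum.inl x := by
        have : Sum.inl x ∈ Sum.inl '' M := Set.mem_image_of_mem (Sum.inl : V → V ⊕ Fin 0) hx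
        rw [hv, Set.mem_singleton_iff] at this
        exact this.symm
      refine ⟨x, ?_⟩
      ext y
      constructor
      · intro hy
        have : Sum.inl y ∈ Sum.inl '' M := Set.mem_image_of_mem (Sum.inl : V → V ⊕ Fin 0) hy
        rw [hv, Set.mem_singleton_iff, hvx] at this
        rw [Set.mem_singleton_iff]
        exact Sum.inl.inj this
      · intro hy
        rw [Set.mem_singleton_iff] at hy
        rw [hy]; exact hx
    · apply hMnt
      right; right
      rw [Set.eq_univ_iff_forall]
      intro y
      have : (Sum.inl y : V ⊕ Fin 0) ∈ Sum.inl '' M := by rw [h]; exact Set.mem_univ _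
      obtain ⟨y', hy', he⟩ := this
      rwa [← Sum.inl.inj he]
  have hmem := Nat.sInf_mem (⟨1, h1⟩ : S01.Nonempty)
  have hle := Nat.sInf_le h1
  have hne0 : sInf S01 ≠ 0 := fun h => h0 (h ▸ hmem)
  have : sInf S01 = 1 := by omega
  rw [SimpleGraph.primeBound, ← hS01]
  exact this
end
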